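/- arXiv:2504.11941 — 6 statements merged into one kernel-verified Lean document; each statement's English description precedes it below -/
import Mathlib

section
/- Let H be a d-uniform hypergraph and 1 ≤ k ≤ ν(H). Then (d−1)·aim(H,k) equals the maximum of |V(M)| − |M| over all generalized k-admissible matchings M of H. -/
open scoped Classical

variable {V : Type*} [DecidableEq V]

/-- A matching of a hypergraph with edge set `E`: a set of pairwise disjoint edges. -/
def IsMatching (E M : Finset (Finset V)) : Prop :=
  M ⊆ E ∧ ∀ e ∈ M, ∀ f ∈ M, e ≠ f → Disjoint e f

/-- The set of vertices covered by a set of edges. -/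
def verts (M : Finset (Finset V)) : Finset V := M.sup id

/-- Edge set of the induced sub-hypergraph on the vertex set `W`. -/
def inducedSub (E : Finset (Finset V)) (W : Finset V) : Finset (Finset V) :=
  E.filter (fun e => e ⊆ W)

/-- The matching number. -/
noncomputable def matchNum (E : Finset (Finset V)) : ℕ :=
  sSup {n : ℕ | ∃ M : Finset (Finset V), IsMatching E M ∧ M.card = n}

/-- `P` is a partition of the finite set `M` into nonempty pairwise disjoint parts. -/
def IsPartitionOf (M : Finset (Finset V)) (P : Finset (Finset (Finset V))) : Prop :=
  (∀ p ∈ P, p ≠ ∅) ∧ (∀ p ∈ P, ∀ q ∈ P, p ≠ q → Disjoint p q) ∧ P.sup id = M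

/-- A partition witnessing that `M` is a generalized `k`-admissible matching. -/
def GenAdmPartition (E M : Finset (Finset V)) (k : ℕ)
    (P : Finset (Finset (Finset V))) : Prop :=
  IsPartitionOf M P ∧
  (∀ e ∈ inducedSub E (verts M), ∃ p ∈ P, e ⊆ verts p) ∧
  k ≤ M.card ∧ M.card ≤ P.card + k - 1 ∧
  ∀ p ∈ P, ∀ M' : Finset (Finset V),
    IsMatching (inducedSub E (verts p)) M' → M'.card = p.card → verts M' = verts p

/-- Generalized `k`-admissible matching. -/
def IsGenAdmissible (E M : Finset (Finset V)) (k : ℕ) : Prop :=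
  IsMatching E M ∧ ∃ P, GenAdmPartition E M k P

/-- A partition witnessing that `M` is a `k`-admissible matching (d-uniform setting). -/
def AdmPartition (E M : Finset (Finset V)) (k : ℕ)
    (P : Finset (Finset (Finset V))) : Prop :=
  IsPartitionOf M P ∧
  (∀ e ∈ inducedSub E (verts M), ∃ p ∈ P, e ⊆ verts p) ∧
  M.card ≤ P.card + k - 1

/-- `k`-admissible matching. -/
def IsAdmissible (E M : Finset (Finset V)) (k : ℕ) : Prop :=
  IsMatching E M ∧ ∃ P, AdmPartition E M k P

/-- The `k`-admissible matching number `aim(H, k)`. -/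
noncomputable def aim (E : Finset (Finset V)) (k : ℕ) : ℕ :=
  sSup {n : ℕ | ∃ M : Finset (Finset V), IsAdmissible E M k ∧ M.card = n}

lemma card_verts_aux {d : ℕ} {M : Finset (Finset V)} (hd : ∀ e ∈ M, e.card = d)
    (hdisj : ∀ e ∈ M, ∀ f ∈ M, e ≠ f → Disjoint e f) :
    (verts M).card = d * M.card := by
  unfold verts
  rw [Finset.sup_eq_biUnion, show M.biUnion id = M.biUnion (fun x => x) from rfl,
    Finset.card_biUnion hdisj, Finset.sum_congr rfl (fun e he => hd e he)]
  simp [mul_comm]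

lemma verts_mono {M N : Finset (Finset V)} (h : M ⊆ N) : verts M ⊆ verts N := by
  intro x hx
  rw [verts, Finset.mem_sup] at hx ⊢
  obtain ⟨e, he, hxe⟩ := hx
  exact ⟨e, h he, hxe⟩

/-- Any admissible matching of card ≥ k is generalized admissible. -/
lemma adm_to_gen {E M : Finset (Finset V)} {d k : ℕ}
    (hunif : ∀ e ∈ E, e.card = d) (hM : IsAdmissible E M k) (hcard : k ≤ M.card) :
    IsGenAdmissible E M k := by
  obtain ⟨hmatch, P, hpart, hcover, hbound⟩ := hM
  refine ⟨hmatch, P, hpart, hcover, hcard, hbound, ?_⟩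
  intro p hp M' hM' hcardeq
  have hpM : p ⊆ M := by
    rw [← hpart.2.2]
    exact Finset.le_sup (f := id) hp
  have hpE : p ⊆ E := hpM.trans hmatch.1
  have hM'E : M' ⊆ E := hM'.1.trans (Finset.filter_subset _ _)
  have h1 : (verts M').card = d * M'.card :=
    card_verts_aux (fun e he => hunif e (hM'E he)) hM'.2
  have h2 : (verts p).card = d * p.card :=
    card_verts_aux (fun e he => hunif e (hpE he))
      (fun e he f hf => hmatch.2 e (hpM he) f (hpM hf))
  have hsub : verts M' ⊆ verts p := by
    intro x hx
    rw [verts, Finset.mem_sup] at hx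
    obtain ⟨e, he, hxe⟩ := hx
    exact (Finset.mem_filter.mp (hM'.1 he)).2 hxe
  exact Finset.eq_of_subset_of_card_le hsub (by rw [h1, h2, hcardeq])

lemma gen_to_adm {E M : Finset (Finset V)} {k : ℕ}
    (hM : IsGenAdmissible E M k) : IsAdmissible E M k := by
  obtain ⟨hmatch, P, hpart, hcover, _, hbound, _⟩ := hM
  exact ⟨hmatch, P, hpart, hcover, hbound⟩

/-- Any nonempty matching of card ≤ k is k-admissible (trivial partition). -/
lemma small_adm {E M : Finset (Finset V)} {k : ℕ} (hM : IsMatching E M)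
    (hne : M ≠ ∅) (hcard : M.card ≤ k) : IsAdmissible E M k := by
  refine ⟨hM, {M}, ⟨?_, ?_, ?_⟩, ?_, ?_⟩
  · intro p hp; rw [Finset.mem_singleton] at hp; subst hp; exact hne
  · intro p hp q hq hpq
    rw [Finset.mem_singleton] at hp hq; subst hp; subst hq; exact absurd rfl hpq
  · simp
  · intro e he
    exact ⟨M, Finset.mem_singleton_self M, (Finset.mem_filter.mp he).2⟩
  · simpa using hcard.trans (by omega)

/-- For a `d`-uniform hypergraph, `(d-1) · aim(H,k)` is the maximum of `|V(M)| - |M|`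
over all generalized `k`-admissible matchings `M`. -/
theorem aim_eq_max_genAdmissible (E : Finset (Finset V)) (d k : ℕ) (hd : 1 ≤ d)
    (hunif : ∀ e ∈ E, e.card = d) (hk1 : 1 ≤ k) (hk2 : k ≤ matchNum E) :
    (d - 1) * aim E k =
      sSup {t : ℕ | ∃ M : Finset (Finset V),
        IsGenAdmissible E M k ∧ t = (verts M).card - M.card} := by
  -- a matching of card exactly k exists
  have hbdd0 : BddAbove {n : ℕ | ∃ M : Finset (Finset V), IsMatching E M ∧ M.card = n} := by
    refine ⟨E.card, fun n hn => ?_⟩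
    obtain ⟨M, hM, rfl⟩ := hn
    exact Finset.card_le_card hM.1
  have hne0 : {n : ℕ | ∃ M : Finset (Finset V), IsMatching E M ∧ M.card = n}.Nonempty :=
    ⟨0, ∅, ⟨Finset.empty_subset _, by simp⟩, rfl⟩
  have hmem0 := Nat.sSup_mem hne0 hbdd0
  obtain ⟨Mbig, hMbig, hMbigcard⟩ := hmem0
  have hkbig : k ≤ Mbig.card := by rw [hMbigcard]; exact hk2
  obtain ⟨Mk, hMkS, hMkcard⟩ := Finset.exists_subset_card_eq hkbig
  have hMk : IsMatching E Mk :=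
    ⟨hMkS.trans hMbig.1, fun e he f hf => hMbig.2 e (hMkS he) f (hMkS hf)⟩
  have hMkne : Mk ≠ ∅ := by
    intro h; rw [h] at hMkcard; simp at hMkcard; omega
  have hMkadm : IsAdmissible E Mk k := small_adm hMk hMkne (le_of_eq hMkcard)
  -- aim set
  set S1 := {n : ℕ | ∃ M : Finset (Finset V), IsAdmissible E M k ∧ M.card = n} with hS1
  have hbdd1 : BddAbove S1 := by
    refine ⟨E.card, fun n hn => ?_⟩
    obtain ⟨M, hM, rfl⟩ := hn
    exact Finset.card_le_card hM.1.1
  have hne1 : S1.Nonempty := ⟨k, Mk, hMkadm, hMkcard⟩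
  have haim_mem : aim E k ∈ S1 := Nat.sSup_mem hne1 hbdd1
  obtain ⟨M0, hM0adm, hM0card⟩ := haim_mem
  have haimk : k ≤ aim E k := le_csSup hbdd1 ⟨Mk, hMkadm, hMkcard⟩
  have hM0gen : IsGenAdmissible E M0 k := adm_to_gen hunif hM0adm (by omega)
  -- the RHS set
  set S2 := {t : ℕ | ∃ M : Finset (Finset V),
      IsGenAdmissible E M k ∧ t = (verts M).card - M.card} with hS2
  have key : ∀ M : Finset (Finset V), IsMatching E M →
      (verts M).card - M.card = (d - 1) * M.card := by
    intro M hM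
    have := card_verts_aux (fun e he => hunif e (hM.1 he)) hM.2
    rw [this]
    cases d with
    | zero => omega
    | succ n => simp [Nat.succ_sub_one, Nat.succ_mul]
  have hbdd2 : BddAbove S2 := by
    refine ⟨(verts E).card, fun t ht => ?_⟩
    obtain ⟨M, hM, rfl⟩ := ht
    exact le_trans (Nat.sub_le _ _) (Finset.card_le_card (verts_mono hM.1.1))
  have hne2 : S2.Nonempty := ⟨_, M0, hM0gen, rfl⟩
  apply le_antisymm
  · have : (verts M0).card - M0.card ∈ S2 := ⟨M0, hM0gen, rfl⟩
    have hle := le_csSup hbdd2 this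
    rwa [key M0 hM0adm.1, hM0card] at hle
  · apply csSup_le hne2
    intro t ht
    obtain ⟨M, hMgen, rfl⟩ := ht
    rw [key M hMgen.1]
    have hMcard : M.card ≤ aim E k :=
      le_csSup hbdd1 ⟨M, gen_to_adm hMgen, rfl⟩
    exact Nat.mul_le_mul_left _ hMcard
end

section
/- Let H be a d-uniform hypergraph and 2 ≤ k ≤ ν(H). Then aim(H,k) ≤ aim(H,k−1) + 1. -/
open scoped Classical

variable {V : Type*} [DecidableEq V]

lemma mem_verts' {M : Finset (Finset V)} {x : V} :
    x ∈ verts M ↔ ∃ f ∈ M, x ∈ f := by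
  simp [verts, Finset.mem_sup]

lemma verts_erase' {E M N : Finset (Finset V)} (hM : IsMatching E M) (hN : N ⊆ M)
    {e : Finset V} (he : e ∈ N) : verts (N.erase e) = verts N \ e := by
  ext x
  simp only [mem_verts', Finset.mem_sdiff, Finset.mem_erase]
  constructor
  · rintro ⟨f, ⟨hfe, hfN⟩, hx⟩
    exact ⟨⟨f, hfN, hx⟩,
      fun hxe => Finset.disjoint_left.mp (hM.2 f (hN hfN) e (hN he) hfe) hx hxe⟩
  · rintro ⟨⟨f, hfN, hx⟩, hxe⟩
    exact ⟨f, ⟨fun h => hxe (h ▸ hx), hfN⟩, hx⟩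

lemma aim_bddAbove (E : Finset (Finset V)) (k : ℕ) :
    BddAbove {n : ℕ | ∃ M : Finset (Finset V), IsAdmissible E M k ∧ M.card = n} := by
  refine ⟨E.card, ?_⟩
  rintro n ⟨M, hM, rfl⟩
  exact Finset.card_le_card hM.1.1

/-- For a `d`-uniform hypergraph and `2 ≤ k ≤ ν(H)`, `aim(H,k) ≤ aim(H,k-1) + 1`. -/
theorem aim_le_aim_pred_add_one (E : Finset (Finset V)) (d k : ℕ) (hd : 1 ≤ d)
    (hunif : ∀ e ∈ E, e.card = d) (hk1 : 2 ≤ k) (hk2 : k ≤ matchNum E) :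
    aim E k ≤ aim E (k - 1) + 1 := by
  classical
  set S : Set ℕ := {n : ℕ | ∃ M : Finset (Finset V), IsAdmissible E M k ∧ M.card = n}
    with hSdef
  by_cases hS : S.Nonempty
  · have hmem : aim E k ∈ S := Nat.sSup_mem hS (aim_bddAbove E k)
    obtain ⟨M, ⟨hmatch, P, hpart, hind, hcard⟩, hc⟩ := hmem
    by_cases hle : M.card ≤ P.card + k - 2
    · -- M itself is (k-1)-admissible
      have : M.card ∈ {n : ℕ | ∃ M : Finset (Finset V), IsAdmissible E M (k - 1) ∧ M.card = n} :=
        ⟨M, ⟨hmatch, P, hpart, hind, by omega⟩, rfl⟩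
      have h2 := le_csSup (aim_bddAbove E (k - 1)) this
      calc aim E k = M.card := hc.symm
        _ ≤ aim E (k - 1) := h2
        _ ≤ aim E (k - 1) + 1 := by omega
    · -- tight case: M.card = P.card + k - 1
      obtain ⟨hne, hdisj, hsup⟩ := hpart
      have hMeq : M.card = P.card + k - 1 := by omega
      -- some part has at least two edges
      have hbig : ∃ p ∈ P, 2 ≤ p.card := by
        by_contra hcon
        push_neg at hcon
        have hMb : M = P.biUnion id := by
          rw [← hsup]; exact Finset.sup_eq_biUnion P id
        have h1 : M.card ≤ ∑ p ∈ P, p.card := by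
          rw [hMb]; exact Finset.card_biUnion_le
        have h2 : ∑ p ∈ P, p.card ≤ ∑ _p ∈ P, 1 :=
          Finset.sum_le_sum (fun p hp => by have := hcon p hp; omega)
        simp only [Finset.sum_const, smul_eq_mul, mul_one] at h2
        omega
      obtain ⟨p, hpP, hp2⟩ := hbig
      have hpM : p ⊆ M := by
        rw [← hsup]; exact Finset.le_sup (f := id) hpP
      obtain ⟨e, he⟩ := Finset.card_pos.mp (by omega : 0 < p.card)
      have heM : e ∈ M := hpM he
      set M' : Finset (Finset V) := M.erase e with hM'def
      set P' : Finset (Finset (Finset V)) := insert (p.erase e) (P.erase p) with hP'def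
      have hpe_sub : p.erase e ⊆ p := Finset.erase_subset e p
      have hpe_ne : p.erase e ≠ ∅ := by
        have : 0 < (p.erase e).card := by
          rw [Finset.card_erase_of_mem he]; omega
        exact Finset.card_pos.mp this |>.ne_empty
      have hpe_notin : p.erase e ∉ P.erase p := by
        intro hmem
        obtain ⟨hne', hmemP⟩ := Finset.mem_erase.mp hmem
        obtain ⟨f, hf⟩ := Finset.nonempty_iff_ne_empty.mpr hpe_ne
        exact Finset.disjoint_left.mp (hdisj _ hmemP _ hpP hne') hf (hpe_sub hf)
      -- vertex set facts
      have hvM : verts M' = verts M \ e := verts_erase' ⟨hmatch.1, hmatch.2⟩ (le_refl M) heM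
      have hvp : verts (p.erase e) = verts p \ e := verts_erase' ⟨hmatch.1, hmatch.2⟩ hpM he
      -- P' is a partition of M'
      have hne' : ∀ q ∈ P', q ≠ ∅ := by
        intro q hq
        rcases Finset.mem_insert.mp hq with h | h
        · exact h ▸ hpe_ne
        · exact hne q (Finset.mem_erase.mp h).2
      have hdisj' : ∀ q ∈ P', ∀ r ∈ P', q ≠ r → Disjoint q r := by
        intro q hq r hr hqr
        rcases Finset.mem_insert.mp hq with h1 | h1 <;>
          rcases Finset.mem_insert.mp hr with h2 | h2
        · exact absurd (h1.trans h2.symm) hqr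
        · obtain ⟨hrp, hrP⟩ := Finset.mem_erase.mp h2
          exact h1 ▸ Finset.disjoint_of_subset_left hpe_sub (hdisj p hpP r hrP (Ne.symm hrp))
        · obtain ⟨hqp, hqP⟩ := Finset.mem_erase.mp h1
          exact h2 ▸ Finset.disjoint_of_subset_right hpe_sub (hdisj q hqP p hpP hqp)
        · exact hdisj q (Finset.mem_erase.mp h1).2 r (Finset.mem_erase.mp h2).2 hqr
      have hsup' : P'.sup id = M' := by
        ext f
        simp only [Finset.mem_sup, hP'def, Finset.mem_insert, id, hM'def, Finset.mem_erase]
        constructor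
        · rintro ⟨q, hq, hfq⟩
          rcases hq with rfl | hq
          · obtain ⟨hfe, hfp⟩ := Finset.mem_erase.mp hfq
            exact ⟨hfe, hpM hfp⟩
          · obtain ⟨hqp, hqP⟩ := hq
            refine ⟨?_, ?_⟩
            · intro hfeq
              exact Finset.disjoint_left.mp (hdisj q hqP p hpP hqp) hfq (hfeq ▸ he)
            · rw [← hsup]; exact Finset.mem_sup.mpr ⟨q, hqP, hfq⟩
        · rintro ⟨hfe, hfM⟩
          have : f ∈ P.sup id := hsup ▸ hfM
          obtain ⟨q, hqP, hfq⟩ := Finset.mem_sup.mp this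
          by_cases hqp : q = p
          · exact ⟨p.erase e, Or.inl rfl, Finset.mem_erase.mpr ⟨hfe, hqp ▸ hfq⟩⟩
          · exact ⟨q, Or.inr ⟨hqp, hqP⟩, hfq⟩
      -- induced condition
      have hind' : ∀ f ∈ inducedSub E (verts M'), ∃ q ∈ P', f ⊆ verts q := by
        intro f hf
        obtain ⟨hfE, hfsub⟩ := Finset.mem_filter.mp hf
        have hfM : f ⊆ verts M := by
          intro x hx
          exact (Finset.mem_sdiff.mp (hvM ▸ hfsub hx)).1
        obtain ⟨q, hqP, hfq⟩ := hind f (Finset.mem_filter.mpr ⟨hfE, hfM⟩)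
        by_cases hqp : q = p
        · refine ⟨p.erase e, Finset.mem_insert_self _ _, ?_⟩
          rw [hvp]
          rw [hqp] at hfq
          intro x hx
          refine Finset.mem_sdiff.mpr ⟨hfq hx, ?_⟩
          exact (Finset.mem_sdiff.mp (hvM ▸ hfsub hx)).2
        · exact ⟨q, Finset.mem_insert_of_mem (Finset.mem_erase.mpr ⟨hqp, hqP⟩), hfq⟩
      -- cardinalities
      have hPcard : P'.card = P.card := by
        rw [hP'def, Finset.card_insert_of_notMem hpe_notin,
          Finset.card_erase_of_mem hpP]
        have : 0 < P.card := Finset.card_pos.mpr ⟨p, hpP⟩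
        omega
      have hMcard : M'.card = M.card - 1 := Finset.card_erase_of_mem heM
      have hMpos : 0 < M.card := Finset.card_pos.mpr ⟨e, heM⟩
      -- M' is a (k-1)-admissible matching
      have hadm : IsAdmissible E M' (k - 1) := by
        refine ⟨⟨(Finset.erase_subset e M).trans hmatch.1, ?_⟩,
          P', ⟨hne', hdisj', hsup'⟩, hind', ?_⟩
        · intro a ha b hb hab
          exact hmatch.2 a (Finset.erase_subset e M ha) b (Finset.erase_subset e M hb) hab
        · omega
      have hmem' : M'.card ∈
          {n : ℕ | ∃ M : Finset (Finset V), IsAdmissible E M (k - 1) ∧ M.card = n} :=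
        ⟨M', hadm, rfl⟩
      have h2 := le_csSup (aim_bddAbove E (k - 1)) hmem'
      calc aim E k = M.card := hc.symm
        _ ≤ M'.card + 1 := by omega
        _ ≤ aim E (k - 1) + 1 := by exact Nat.add_le_add_right h2 1
  · have : S = ∅ := Set.not_nonempty_iff_eq_empty.mp hS
    have : aim E k = 0 := by
      simp only [aim, ← hSdef, this, csSup_empty]
      rfl
    omega
end

section
/- Let G be the complete graph on 2k vertices. Then aim(G,k) = k, while the Erey–Hibi k-admissible matching number aim*(G,k) equals 1; in particular the difference aim(G,k) − aim*(G,k) = k − 1 can be arbitrarily large. -/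
open scoped Classical

variable {V : Type*} [DecidableEq V]

/-- The edges of a simple graph, as a set of `2`-element vertex subsets. -/
noncomputable def graphEdges [Fintype V] (G : SimpleGraph V) : Finset (Finset V) :=
  Finset.univ.filter (fun s : Finset V =>
    s.card = 2 ∧ ∀ a ∈ s, ∀ b ∈ s, a ≠ b → G.Adj a b)

/-- The `k`-admissible matching number of a graph. -/
noncomputable def aimG [Fintype V] (G : SimpleGraph V) (k : ℕ) : ℕ :=
  aim (graphEdges G) k

/-- The Erey–Hibi `k`-admissible matchings: additionally each part must induce a forest. -/
def IsAdmissibleStar [Fintype V] (G : SimpleGraph V) (M : Finset (Finset V)) (k : ℕ) : Prop :=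
  IsMatching (graphEdges G) M ∧ ∃ P : Finset (Finset (Finset V)),
    AdmPartition (graphEdges G) M k P ∧
    ∀ p ∈ P, (SimpleGraph.induce (↑(verts p) : Set V) G).IsAcyclic

/-- The Erey–Hibi `k`-admissible matching number `aim*(G,k)`. -/
noncomputable def aimStar [Fintype V] (G : SimpleGraph V) (k : ℕ) : ℕ :=
  sSup {n : ℕ | ∃ M : Finset (Finset V), IsAdmissibleStar G M k ∧ M.card = n}

section AuxAim

variable {W : Type*} [DecidableEq W]

lemma aux_mem_graphEdges_top [Fintype W] (s : Finset W) :
    s ∈ graphEdges (⊤ : SimpleGraph W) ↔ s.card = 2 := by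
  simp [graphEdges]

lemma aux_verts_card (M : Finset (Finset W)) (h2 : ∀ e ∈ M, e.card = 2)
    (hd : ∀ e ∈ M, ∀ f ∈ M, e ≠ f → Disjoint e f) :
    (verts M).card = 2 * M.card := by
  unfold verts
  rw [Finset.sup_eq_biUnion, Finset.card_biUnion (t := id) hd]
  rw [Finset.sum_congr rfl (fun e he => (show (id e).card = 2 from h2 e he)),
    Finset.sum_const, smul_eq_mul, mul_comm]

lemma aux_acyclic_small {α : Type*} [Fintype α] (G : SimpleGraph α)
    (h : Fintype.card α ≤ 2) : G.IsAcyclic := by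
  intro v c hc
  have h3 := hc.three_le_length
  have hn := hc.support_nodup
  have h4 := List.Nodup.length_le_card hn
  have hlen : c.support.length = c.length + 1 := SimpleGraph.Walk.length_support c
  have h5 : c.support.tail.length = c.length := by simp [hlen]
  omega

lemma aux_top_not_acyclic {α : Type*} (a b c : α) (hab : a ≠ b) (hbc : b ≠ c)
    (hac : a ≠ c) : ¬ (⊤ : SimpleGraph α).IsAcyclic := by
  intro h
  exact h (SimpleGraph.Walk.cons (by simp [hab] : (⊤ : SimpleGraph α).Adj a b)
    (SimpleGraph.Walk.cons (by simp [hbc] : (⊤ : SimpleGraph α).Adj b c)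
      (SimpleGraph.Walk.cons (by simp [hac.symm] : (⊤ : SimpleGraph α).Adj c a)
        SimpleGraph.Walk.nil)))
    (by constructor
        · constructor
          · simp [SimpleGraph.Walk.isTrail_def, Sym2.eq_iff]
            tauto
          · simp
        · simp [hab, hbc, hac]
          tauto)

lemma aux_top_not_acyclic_card {α : Type*} [Fintype α] (h : 3 ≤ Fintype.card α) :
    ¬ (⊤ : SimpleGraph α).IsAcyclic := by
  classical
  have hcard : (Finset.univ : Finset α).card = Fintype.card α := Finset.card_univ
  obtain ⟨a, ha⟩ : (Finset.univ : Finset α).Nonempty := by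
    rw [← Finset.card_pos]; omega
  obtain ⟨b, hb⟩ : (Finset.univ.erase a).Nonempty := by
    rw [← Finset.card_pos, Finset.card_erase_of_mem ha]; omega
  obtain ⟨c, hc⟩ : ((Finset.univ.erase a).erase b).Nonempty := by
    rw [← Finset.card_pos, Finset.card_erase_of_mem hb,
      Finset.card_erase_of_mem ha]; omega
  have hba : b ≠ a := Finset.ne_of_mem_erase hb
  have hcb : c ≠ b := Finset.ne_of_mem_erase hc
  have hca : c ≠ a := Finset.ne_of_mem_erase (Finset.mem_of_mem_erase hc)
  exact aux_top_not_acyclic a b c hba.symm hcb.symm hca.symm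

lemma aux_induce_top [Fintype W] (s : Finset W) :
    SimpleGraph.induce (↑s : Set W) (⊤ : SimpleGraph W) = ⊤ := by
  ext a b
  simp only [SimpleGraph.comap_adj, SimpleGraph.top_adj, Function.Embedding.coe_subtype, ne_eq, Subtype.ext_iff]

end AuxAim
open Fin.NatCast in
/-- For the complete graph `G` on `2k` vertices, `aim(G,k) = k` while the Erey–Hibi
number `aim*(G,k) = 1`; in particular their difference is `k - 1`. -/
theorem aim_complete_graph (k : ℕ) (hk : 1 ≤ k) :
    aimG (⊤ : SimpleGraph (Fin (2 * k))) k = k ∧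
    aimStar (⊤ : SimpleGraph (Fin (2 * k))) k = 1 ∧
    aimG (⊤ : SimpleGraph (Fin (2 * k))) k - aimStar (⊤ : SimpleGraph (Fin (2 * k))) k
      = k - 1 := by
  haveI : NeZero (2 * k) := ⟨by omega⟩
  set E := graphEdges (⊤ : SimpleGraph (Fin (2 * k))) with hE
  have key : ∀ n : ℕ, n < 2 * k → ((n : Fin (2 * k)) : ℕ) = n := fun n hn => by
    simp [Fin.val_natCast, Nat.mod_eq_of_lt hn]
  -- generic fact: any matching has at most k edges
  have hmatch_le : ∀ M : Finset (Finset (Fin (2 * k))),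
      IsMatching E M → M.card ≤ k := by
    intro M ⟨hsub, hd⟩
    have h2 : ∀ e ∈ M, e.card = 2 := fun e he =>
      (aux_mem_graphEdges_top e).1 (hsub he)
    have hv := aux_verts_card M h2 hd
    have hle : (verts M).card ≤ 2 * k := by
      calc (verts M).card ≤ Fintype.card (Fin (2 * k)) := Finset.card_le_univ _
        _ = 2 * k := Fintype.card_fin _
    omega
  -- the perfect matching
  set M0 : Finset (Finset (Fin (2 * k))) := (Finset.range k).image
    (fun i => ({((2 * i : ℕ) : Fin (2 * k)), ((2 * i + 1 : ℕ) : Fin (2 * k))} :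
      Finset (Fin (2 * k)))) with hM0
  have hmem0 : ∀ e ∈ M0, ∃ i < k,
      e = ({((2 * i : ℕ) : Fin (2 * k)), ((2 * i + 1 : ℕ) : Fin (2 * k))} :
        Finset (Fin (2 * k))) := by
    intro e he
    rw [hM0, Finset.mem_image] at he
    obtain ⟨i, hi, hie⟩ := he
    exact ⟨i, Finset.mem_range.1 hi, hie.symm⟩
  have hne0 : ∀ i < k, ((2 * i : ℕ) : Fin (2 * k)) ≠ ((2 * i + 1 : ℕ) : Fin (2 * k)) := by
    intro i hi h
    have := congrArg Fin.val h
    rw [key _ (by omega), key _ (by omega)] at this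
    omega
  have hcard2 : ∀ e ∈ M0, e.card = 2 := by
    intro e he
    obtain ⟨i, hi, rfl⟩ := hmem0 e he
    exact Finset.card_pair (hne0 i hi)
  have hdisj0 : ∀ e ∈ M0, ∀ f ∈ M0, e ≠ f → Disjoint e f := by
    intro e he f hf hef
    obtain ⟨i, hi, rfl⟩ := hmem0 e he
    obtain ⟨j, hj, rfl⟩ := hmem0 f hf
    rw [Finset.disjoint_left]
    intro x hx hx'
    simp only [Finset.mem_insert, Finset.mem_singleton] at hx hx'
    have hij : i ≠ j := fun h => hef (by rw [h])
    rcases hx with rfl | rfl <;> rcases hx' with h | h <;>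
      · have := congrArg Fin.val h
        rw [key _ (by omega), key _ (by omega)] at this
        omega
  have hM0card : M0.card = k := by
    rw [hM0, Finset.card_image_of_injOn, Finset.card_range]
    intro i hi j hj hij
    have hi' := Finset.mem_range.1 hi
    have hj' := Finset.mem_range.1 hj
    simp only at hij
    have hmem : ((2 * i : ℕ) : Fin (2 * k)) ∈
        ({((2 * j : ℕ) : Fin (2 * k)), ((2 * j + 1 : ℕ) : Fin (2 * k))} :
          Finset (Fin (2 * k))) := by
      rw [← hij]; exact Finset.mem_insert_self _ _
    simp only [Finset.mem_insert, Finset.mem_singleton] at hmem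
    rcases hmem with h | h <;>
      · have := congrArg Fin.val h
        rw [key _ (by omega), key _ (by omega)] at this
        omega
  have hM0E : M0 ⊆ E := fun e he => (aux_mem_graphEdges_top e).2 (hcard2 e he)
  have hM0matching : IsMatching E M0 := ⟨hM0E, hdisj0⟩
  have hM0adm : IsAdmissible E M0 k := by
    refine ⟨hM0matching, {M0}, ⟨⟨?_, ?_, ?_⟩, ?_, ?_⟩⟩
    · intro p hp
      rw [Finset.mem_singleton] at hp
      subst hp
      intro h
      rw [h, Finset.card_empty] at hM0card
      omega
    · intro p hp q hq hpq
      rw [Finset.mem_singleton] at hp hq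
      exact absurd (hp.trans hq.symm) hpq
    · exact Finset.sup_singleton
    · intro e he
      exact ⟨M0, Finset.mem_singleton_self _, by
        rw [show verts M0 = verts M0 from rfl]
        exact (Finset.mem_filter.1 he).2⟩
    · rw [hM0card, Finset.card_singleton]
      omega
  -- aimG = k
  have haimG : aimG (⊤ : SimpleGraph (Fin (2 * k))) k = k := by
    have hub : ∀ n ∈ {n : ℕ | ∃ M : Finset (Finset (Fin (2 * k))),
        IsAdmissible E M k ∧ M.card = n}, n ≤ k := by
      rintro n ⟨M, ⟨hm, _⟩, rfl⟩
      exact hmatch_le M hm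
    have hkmem : k ∈ {n : ℕ | ∃ M : Finset (Finset (Fin (2 * k))),
        IsAdmissible E M k ∧ M.card = n} := ⟨M0, hM0adm, hM0card⟩
    unfold aimG aim
    exact le_antisymm (csSup_le ⟨k, hkmem⟩ hub) (le_csSup ⟨k, hub⟩ hkmem)
  -- the single-edge matching
  set e0 : Finset (Fin (2 * k)) := {((0 : ℕ) : Fin (2 * k)), ((1 : ℕ) : Fin (2 * k))}
    with he0
  have he0ne : ((0 : ℕ) : Fin (2 * k)) ≠ ((1 : ℕ) : Fin (2 * k)) := by
    intro h
    have := congrArg Fin.val h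
    rw [key _ (by omega), key _ (by omega)] at this
    omega
  have he0card : e0.card = 2 := Finset.card_pair he0ne
  have he0E : e0 ∈ E := (aux_mem_graphEdges_top e0).2 he0card
  have hvertse0 : verts ({e0} : Finset (Finset (Fin (2 * k)))) = e0 := by
    unfold verts; exact Finset.sup_singleton
  have hstar1 : IsAdmissibleStar (⊤ : SimpleGraph (Fin (2 * k))) {e0} k := by
    refine ⟨⟨fun e he => by rwa [Finset.mem_singleton.1 he], ?_⟩,
      {({e0} : Finset (Finset (Fin (2 * k))))}, ⟨⟨?_, ?_, ?_⟩, ?_, ?_⟩, ?_⟩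
    · intro e he f hf hef
      rw [Finset.mem_singleton] at he hf
      exact absurd (he.trans hf.symm) hef
    · intro p hp
      rw [Finset.mem_singleton] at hp
      subst hp
      simp
    · intro p hp q hq hpq
      rw [Finset.mem_singleton] at hp hq
      exact absurd (hp.trans hq.symm) hpq
    · exact Finset.sup_singleton
    · intro e he
      exact ⟨{e0}, Finset.mem_singleton_self _, (Finset.mem_filter.1 he).2⟩
    · simp
      omega
    · intro p hp
      rw [Finset.mem_singleton] at hp
      subst hp
      apply aux_acyclic_small
      have : Fintype.card ↥(↑(verts ({e0} : Finset (Finset (Fin (2 * k))))) :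
          Set (Fin (2 * k))) = (verts ({e0} : Finset (Finset (Fin (2 * k))))).card := by
        simp
      rw [this, hvertse0, he0card]
  -- upper bound for aimStar
  have hstar_ub : ∀ M : Finset (Finset (Fin (2 * k))),
      IsAdmissibleStar (⊤ : SimpleGraph (Fin (2 * k))) M k → M.card ≤ 1 := by
    rintro M ⟨⟨hsub, hd⟩, P, ⟨⟨hPne, hPdis, hPsup⟩, hPind, _⟩, hPforest⟩
    have h2 : ∀ e ∈ M, e.card = 2 := fun e he =>
      (aux_mem_graphEdges_top e).1 (hsub he)
    -- every part is a singleton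
    have hpart : ∀ p ∈ P, ∃ e ∈ M, p = {e} := by
      intro p hp
      have hpM : p ⊆ M := by
        rw [← hPsup]
        exact Finset.le_sup (f := id) hp
      have hpcard1 : p.card = 1 := by
        by_contra hne
        obtain ⟨e, he⟩ := Finset.nonempty_iff_ne_empty.2 (hPne p hp)
        have hple : 1 ≤ p.card := Finset.card_pos.2 ⟨e, he⟩
        have hp2 : 2 ≤ p.card := by omega
        have hv : (verts p).card = 2 * p.card :=
          aux_verts_card p (fun e he => h2 e (hpM he))
            (fun e he f hf hef => hd e (hpM he) f (hpM hf) hef)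
        have hforest := hPforest p hp
        rw [aux_induce_top] at hforest
        have hcard : Fintype.card ↥(↑(verts p) : Set (Fin (2 * k))) = (verts p).card := by
          simp
        exact aux_top_not_acyclic_card (by omega) hforest
      obtain ⟨e, hpe⟩ := Finset.card_eq_one.1 hpcard1
      exact ⟨e, hpM (hpe ▸ Finset.mem_singleton_self e), hpe⟩
    by_contra hM2
    push_neg at hM2
    obtain ⟨e, he, f, hf, hef⟩ := Finset.one_lt_card.1 (by omega : 1 < M.card)
    obtain ⟨a, b, hab, rfl⟩ := Finset.card_eq_two.1 (h2 e he)
    obtain ⟨c, d, hcd, rfl⟩ := Finset.card_eq_two.1 (h2 f hf)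
    have hdisj := hd _ he _ hf hef
    have hac : a ≠ c := by
      intro h
      exact Finset.disjoint_left.1 hdisj (Finset.mem_insert_self a _)
        (by rw [h]; exact Finset.mem_insert_self c _)
    have hcnotine : c ∉ ({a, b} : Finset (Fin (2 * k))) :=
      Finset.disjoint_right.1 hdisj (Finset.mem_insert_self c _)
    have hgE : ({a, c} : Finset (Fin (2 * k))) ∈ E :=
      (aux_mem_graphEdges_top _).2 (Finset.card_pair hac)
    have hgsub : ({a, c} : Finset (Fin (2 * k))) ⊆ verts M := by
      intro x hx
      rcases Finset.mem_insert.1 hx with h | hx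
      · rw [h]
        exact Finset.le_sup (f := id) he (Finset.mem_insert_self a _)
      · rw [Finset.mem_singleton] at hx
        rw [hx]
        exact Finset.le_sup (f := id) hf (Finset.mem_insert_self c _)
    obtain ⟨r, hr, hgr⟩ := hPind _ (Finset.mem_filter.2 ⟨hgE, hgsub⟩)
    obtain ⟨e', he'M, rfl⟩ := hpart r hr
    have hvr : verts ({e'} : Finset (Finset (Fin (2 * k)))) = e' := by
      unfold verts; exact Finset.sup_singleton
    rw [hvr] at hgr
    have hge' : ({a, c} : Finset (Fin (2 * k))) = e' :=
      Finset.eq_of_subset_of_card_le hgr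
        (by rw [h2 e' he'M, Finset.card_pair hac])
    have hge'ne : ({a, c} : Finset (Fin (2 * k))) ≠ ({a, b} : Finset (Fin (2 * k))) := by
      intro h
      exact hcnotine (h ▸ Finset.mem_insert.2 (Or.inr (Finset.mem_singleton_self c)))
    have hdisj' := hd _ (hge' ▸ he'M) _ he hge'ne
    exact Finset.disjoint_left.1 hdisj' (Finset.mem_insert_self a _)
      (Finset.mem_insert_self a _)
  have haimStar : aimStar (⊤ : SimpleGraph (Fin (2 * k))) k = 1 := by
    have hub : ∀ n ∈ {n : ℕ | ∃ M : Finset (Finset (Fin (2 * k))),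
        IsAdmissibleStar (⊤ : SimpleGraph (Fin (2 * k))) M k ∧ M.card = n}, n ≤ 1 := by
      rintro n ⟨M, hM, rfl⟩
      exact hstar_ub M hM
    have h1mem : 1 ∈ {n : ℕ | ∃ M : Finset (Finset (Fin (2 * k))),
        IsAdmissibleStar (⊤ : SimpleGraph (Fin (2 * k))) M k ∧ M.card = n} :=
      ⟨{e0}, hstar1, Finset.card_singleton _⟩
    unfold aimStar
    exact le_antisymm (csSup_le ⟨1, h1mem⟩ hub) (le_csSup ⟨1, hub⟩ h1mem)
  exact ⟨haimG, haimStar, by rw [haimG, haimStar]⟩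
end

section
/- Let G be a graph and x, y ∈ V(G) with y adjacent to x and N_G[y] ⊆ N_G[x]. Let H = G \ N_G[x] be the induced subgraph on the complement of the closed neighborhood of x. Then for each k ≥ 1 with aim(H,k) defined, aim(H,k) ≤ aim(G,k) − 1. -/
open scoped Classical

variable {V : Type*} [DecidableEq V]

section Aux
variable {V : Type*} [DecidableEq V]

lemma mem_verts_iff {M : Finset (Finset V)} {a : V} :
    a ∈ verts M ↔ ∃ e ∈ M, a ∈ e := by
  simp [verts, Finset.mem_sup]

lemma mem_graphEdges [Fintype V] {G : SimpleGraph V} {e : Finset V} :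
    e ∈ graphEdges G ↔ e.card = 2 ∧ ∀ a ∈ e, ∀ b ∈ e, a ≠ b → G.Adj a b := by
  simp [graphEdges]

lemma aux_bddAbove [Fintype V] (E : Finset (Finset V)) (k : ℕ) :
    BddAbove {n : ℕ | ∃ M : Finset (Finset V), IsAdmissible E M k ∧ M.card = n} := by
  refine ⟨Fintype.card (Finset V), ?_⟩
  rintro n ⟨M, _, rfl⟩
  exact le_trans (Finset.card_le_univ M) (le_of_eq Finset.card_univ)

lemma aux_zero_mem [Fintype V] (G : SimpleGraph V) (k : ℕ) :
    0 ∈ {n : ℕ | ∃ M : Finset (Finset V), IsAdmissible (graphEdges G) M k ∧ M.card = n} := by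
  refine ⟨∅, ⟨⟨Finset.empty_subset _, by simp⟩, ∅, ⟨⟨by simp, by simp, by simp⟩, ?_, by simp⟩⟩, rfl⟩
  intro e he
  exfalso
  simp only [inducedSub, Finset.mem_filter] at he
  have h2 := (mem_graphEdges.mp he.1).1
  have : e = ∅ := Finset.subset_empty.mp (by simpa [verts] using he.2)
  simp [this] at h2

end Aux

/-- If `y` is adjacent to `x` and `N[y] ⊆ N[x]`, then for the induced subgraph `H` of `G`
on the complement of `N[x]` one has `aim(H,k) + 1 ≤ aim(G,k)`, i.e. `aim(H,k) ≤ aim(G,k) - 1`. -/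
theorem aim_deleteClosedNbhd [Fintype V] (G : SimpleGraph V) (x y : V)
    (hxy : G.Adj x y)
    (hsub : insert y (G.neighborSet y) ⊆ insert x (G.neighborSet x))
    (k : ℕ) (hk : 1 ≤ k) :
    aimG (SimpleGraph.induce ((insert x (G.neighborSet x))ᶜ : Set V) G) k + 1
      ≤ aimG G k := by
  classical
  set W : Set V := (insert x (G.neighborSet x))ᶜ with hWdef
  set H : SimpleGraph W := SimpleGraph.induce W G with hHdef
  have hxy' : x ≠ y := G.ne_of_adj hxy
  have hyN : y ∈ insert x (G.neighborSet x) := hsub (Set.mem_insert y _)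
  have hxN : x ∈ insert x (G.neighborSet x) := Set.mem_insert x _
  have hWmem : ∀ v : W, (v : V) ∉ insert x (G.neighborSet x) := fun v => v.2
  -- the edge map
  set fE : Finset W → Finset V := fun e => e.map (Function.Embedding.subtype _) with hfEdef
  have hfE_inj : Function.Injective fE := Finset.map_injective _
  have hfE_mem : ∀ (e : Finset W) (v : V), v ∈ fE e ↔ ∃ u ∈ e, (u : V) = v := by
    intro e v; simp [hfEdef]
  -- obtain an optimal admissible matching of H
  have hsupH : aimG H k ∈
      {n : ℕ | ∃ M : Finset (Finset W), IsAdmissible (graphEdges H) M k ∧ M.card = n} :=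
    Nat.sSup_mem ⟨0, aux_zero_mem H k⟩ (aux_bddAbove _ k)
  obtain ⟨M, ⟨hMmatch, P, hPpart, hPcross, hPcard⟩, hMcard⟩ := hsupH
  set xy : Finset V := {x, y} with hxydef
  have hxycard : xy.card = 2 := Finset.card_pair hxy'
  have hxyE : xy ∈ graphEdges G := by
    refine mem_graphEdges.mpr ⟨hxycard, ?_⟩
    intro a ha b hb hab
    simp only [hxydef, Finset.mem_insert, Finset.mem_singleton] at ha hb
    rcases ha with rfl | rfl <;> rcases hb with rfl | rfl
    · exact absurd rfl hab
    · exact hxy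
    · exact hxy.symm
    · exact absurd rfl hab
  have hx_not_fE : ∀ e : Finset W, x ∉ fE e := by
    intro e hx'
    obtain ⟨u, _, hu⟩ := (hfE_mem e x).mp hx'
    exact hWmem u (hu ▸ hxN)
  have hy_not_fE : ∀ e : Finset W, y ∉ fE e := by
    intro e hy'
    obtain ⟨u, _, hu⟩ := (hfE_mem e y).mp hy'
    exact hWmem u (hu ▸ hyN)
  have hxy_disj : ∀ e : Finset W, Disjoint xy (fE e) := by
    intro e
    rw [Finset.disjoint_left]
    intro a ha
    simp only [hxydef, Finset.mem_insert, Finset.mem_singleton] at ha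
    rcases ha with rfl | rfl
    · exact hx_not_fE e
    · exact hy_not_fE e
  have hxy_ne_fE : ∀ e : Finset W, xy ≠ fE e := by
    intro e h
    exact hx_not_fE e (h ▸ Finset.mem_insert_self x {y})
  -- H-edges map to G-edges
  have hHadj : ∀ u v : W, H.Adj u v ↔ G.Adj (u : V) (v : V) := by
    intro u v; rfl
  have hEdge_map : ∀ e ∈ graphEdges H, fE e ∈ graphEdges G := by
    intro e he
    obtain ⟨hc, hadj⟩ := mem_graphEdges.mp he
    refine mem_graphEdges.mpr ⟨by simp [hfEdef, hc], ?_⟩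
    intro a ha b hb hab
    obtain ⟨u, hu, rfl⟩ := (hfE_mem e a).mp ha
    obtain ⟨v, hv, rfl⟩ := (hfE_mem e b).mp hb
    exact (hHadj u v).mp (hadj u hu v hv (fun h => hab (by rw [h])))
  set M' : Finset (Finset V) := insert xy (M.image fE) with hM'def
  have hxy_not_img : xy ∉ M.image fE := by
    rw [Finset.mem_image]
    rintro ⟨e, _, he⟩
    exact hxy_ne_fE e he.symm
  have hM'card : M'.card = M.card + 1 := by
    rw [hM'def, Finset.card_insert_of_notMem hxy_not_img,
      Finset.card_image_of_injective _ hfE_inj]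
  -- M' is a matching
  have hM'match : IsMatching (graphEdges G) M' := by
    constructor
    · intro e he
      rw [hM'def, Finset.mem_insert] at he
      rcases he with rfl | he
      · exact hxyE
      · obtain ⟨a, ha, rfl⟩ := Finset.mem_image.mp he
        exact hEdge_map a (hMmatch.1 ha)
    · intro e he f hf hef
      rw [hM'def, Finset.mem_insert] at he hf
      rcases he with rfl | he <;> rcases hf with rfl | hf
      · exact absurd rfl hef
      · obtain ⟨a, _, rfl⟩ := Finset.mem_image.mp hf
        exact hxy_disj a
      · obtain ⟨a, _, rfl⟩ := Finset.mem_image.mp he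
        exact (hxy_disj a).symm
      · obtain ⟨a, ha, rfl⟩ := Finset.mem_image.mp he
        obtain ⟨b, hb, rfl⟩ := Finset.mem_image.mp hf
        have hab : a ≠ b := fun h => hef (by rw [h])
        have := hMmatch.2 a ha b hb hab
        rw [Finset.disjoint_left]
        intro v hv hv'
        obtain ⟨u, hu, rfl⟩ := (hfE_mem a v).mp hv
        obtain ⟨u', hu', he'⟩ := (hfE_mem b _).mp hv'
        have : u' = u := Subtype.ext he'
        subst this
        exact (Finset.disjoint_left.mp (hMmatch.2 a ha b hb hab)) hu hu'
  -- the partition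
  set P' : Finset (Finset (Finset V)) := insert {xy} (P.image (fun p => p.image fE)) with hP'def
  have hsingleton_not_img : ({xy} : Finset (Finset V)) ∉ P.image (fun p => p.image fE) := by
    rw [Finset.mem_image]
    rintro ⟨q, hq, hq'⟩
    have : xy ∈ q.image fE := hq' ▸ Finset.mem_singleton_self xy
    obtain ⟨e, _, he⟩ := Finset.mem_image.mp this
    exact hxy_ne_fE e he.symm
  have hP'card : P'.card = P.card + 1 := by
    rw [hP'def, Finset.card_insert_of_notMem hsingleton_not_img,
      Finset.card_image_of_injective _ (Finset.image_injective hfE_inj)]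
  -- verts of M' membership
  have hvertsM' : ∀ a : V, a ∈ verts M' ↔ a ∈ xy ∨ ∃ u : W, u ∈ verts M ∧ (u : V) = a := by
    intro a
    rw [mem_verts_iff]
    constructor
    · rintro ⟨e, he, hae⟩
      rw [hM'def, Finset.mem_insert] at he
      rcases he with rfl | he
      · exact Or.inl hae
      · obtain ⟨b, hb, rfl⟩ := Finset.mem_image.mp he
        obtain ⟨u, hu, rfl⟩ := (hfE_mem b a).mp hae
        exact Or.inr ⟨u, mem_verts_iff.mpr ⟨b, hb, hu⟩, rfl⟩
    · rintro (ha | ⟨u, hu, rfl⟩)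
      · exact ⟨xy, by simp [hM'def], ha⟩
      · obtain ⟨e, he, hue⟩ := mem_verts_iff.mp hu
        exact ⟨fE e, by simp [hM'def]; exact Or.inr ⟨e, he, rfl⟩,
          (hfE_mem e _).mpr ⟨u, hue, rfl⟩⟩
  -- AdmPartition conditions
  have hpartof : IsPartitionOf M' P' := by
    refine ⟨?_, ?_, ?_⟩
    · intro p hp
      rw [hP'def, Finset.mem_insert] at hp
      rcases hp with rfl | hp
      · simp
      · obtain ⟨q, hq, rfl⟩ := Finset.mem_image.mp hp
        have := hPpart.1 q hq
        simp [Finset.image_eq_empty, this]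
    · intro p hp q hq hpq
      rw [hP'def, Finset.mem_insert] at hp hq
      have key : ∀ q' ∈ P, Disjoint ({xy} : Finset (Finset V)) (q'.image fE) := by
        intro q' _
        rw [Finset.disjoint_left]
        intro e he
        rw [Finset.mem_singleton] at he
        subst he
        rw [Finset.mem_image]
        rintro ⟨a, _, ha⟩
        exact hxy_ne_fE a ha.symm
      rcases hp with rfl | hp <;> rcases hq with rfl | hq
      · exact absurd rfl hpq
      · obtain ⟨q', hq', rfl⟩ := Finset.mem_image.mp hq
        exact key q' hq'
      · obtain ⟨p', hp', rfl⟩ := Finset.mem_image.mp hp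
        exact (key p' hp').symm
      · obtain ⟨p', hp', rfl⟩ := Finset.mem_image.mp hp
        obtain ⟨q', hq', rfl⟩ := Finset.mem_image.mp hq
        have hpq' : p' ≠ q' := fun h => hpq (by rw [h])
        have hd := hPpart.2.1 p' hp' q' hq' hpq'
        rw [Finset.disjoint_left]
        intro e he he'
        obtain ⟨a, ha, rfl⟩ := Finset.mem_image.mp he
        obtain ⟨b, hb, hba⟩ := Finset.mem_image.mp he'
        have : b = a := hfE_inj hba
        subst this
        exact Finset.disjoint_left.mp hd ha hb
    · ext e
      rw [Finset.mem_sup]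
      constructor
      · rintro ⟨p, hp, he⟩
        simp only [id_eq] at he
        rw [hP'def, Finset.mem_insert] at hp
        rcases hp with rfl | hp
        · rw [Finset.mem_singleton] at he
          simp [hM'def, he]
        · obtain ⟨q, hq, rfl⟩ := Finset.mem_image.mp hp
          obtain ⟨a, ha, rfl⟩ := Finset.mem_image.mp he
          have haM : a ∈ M := by
            rw [← hPpart.2.2]
            exact Finset.mem_sup.mpr ⟨q, hq, ha⟩
          simp only [hM'def, Finset.mem_insert]
          exact Or.inr (Finset.mem_image.mpr ⟨a, haM, rfl⟩)
      · intro he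
        rw [hM'def, Finset.mem_insert] at he
        rcases he with rfl | he
        · exact ⟨{xy}, by simp [hP'def], Finset.mem_singleton_self _⟩
        · obtain ⟨a, ha, rfl⟩ := Finset.mem_image.mp he
          have : a ∈ P.sup id := hPpart.2.2 ▸ ha
          obtain ⟨q, hq, haq⟩ := Finset.mem_sup.mp this
          refine ⟨q.image fE, ?_, Finset.mem_image.mpr ⟨a, haq, rfl⟩⟩
          simp only [hP'def, Finset.mem_insert]
          exact Or.inr (Finset.mem_image.mpr ⟨q, hq, rfl⟩)
  have hcross : ∀ e ∈ inducedSub (graphEdges G) (verts M'), ∃ p ∈ P', e ⊆ verts p := by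
    intro e he
    rw [inducedSub, Finset.mem_filter] at he
    obtain ⟨heE, hesub⟩ := he
    obtain ⟨hc2, hadj⟩ := mem_graphEdges.mp heE
    obtain ⟨a, b, hab, rfl⟩ := Finset.card_eq_two.mp hc2
    have haM : a ∈ verts M' := hesub (Finset.mem_insert_self a {b})
    have hbM : b ∈ verts M' := hesub (by simp)
    have hGab : G.Adj a b := hadj a (by simp) b (by simp) hab
    -- key: no crossing edge between xy and W
    have hkey : ∀ c d : V, G.Adj c d → c ∈ xy → (∃ u : W, (u : V) = d) → False := by
      rintro c d hcd hc ⟨u, rfl⟩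
      simp only [hxydef, Finset.mem_insert, Finset.mem_singleton] at hc
      rcases hc with rfl | rfl
      · exact hWmem u (Set.mem_insert_iff.mpr (Or.inr hcd))
      · exact hWmem u (hsub (Set.mem_insert_iff.mpr (Or.inr hcd)))
    rcases (hvertsM' a).mp haM with ha | ⟨u, hu, rfl⟩
    · rcases (hvertsM' b).mp hbM with hb | ⟨v, hv, rfl⟩
      · refine ⟨{xy}, by simp [hP'def], ?_⟩
        have : verts ({xy} : Finset (Finset V)) = xy := by simp [verts]
        rw [this]
        intro c hc
        simp only [Finset.mem_insert, Finset.mem_singleton] at hc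
        rcases hc with rfl | rfl
        · exact ha
        · exact hb
      · exact absurd (hkey a _ hGab ha ⟨v, rfl⟩) not_false
    · rcases (hvertsM' b).mp hbM with hb | ⟨v, hv, rfl⟩
      · exact absurd (hkey b _ hGab.symm hb ⟨u, rfl⟩) not_false
      · -- both inside W
        have huv : u ≠ v := fun h => hab (by rw [h])
        have hHuv : H.Adj u v := (hHadj u v).mpr hGab
        have heH : ({u, v} : Finset W) ∈ graphEdges H := by
          refine mem_graphEdges.mpr ⟨Finset.card_pair huv, ?_⟩
          intro c hc d hd hcd
          simp only [Finset.mem_insert, Finset.mem_singleton] at hc hd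
          rcases hc with rfl | rfl <;> rcases hd with rfl | rfl
          · exact absurd rfl hcd
          · exact hHuv
          · exact hHuv.symm
          · exact absurd rfl hcd
        have hsubM : ({u, v} : Finset W) ⊆ verts M := by
          intro c hc
          simp only [Finset.mem_insert, Finset.mem_singleton] at hc
          rcases hc with rfl | rfl
          · exact hu
          · exact hv
        obtain ⟨q, hq, hq'⟩ := hPcross ({u, v}) (by
          rw [inducedSub, Finset.mem_filter]; exact ⟨heH, hsubM⟩)
        refine ⟨q.image fE, by
          simp only [hP'def, Finset.mem_insert]
          exact Or.inr (Finset.mem_image.mpr ⟨q, hq, rfl⟩), ?_⟩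
        intro c hc
        simp only [Finset.mem_insert, Finset.mem_singleton] at hc
        have hlift : ∀ w : W, w ∈ verts q → (w : V) ∈ verts (q.image fE) := by
          intro w hw
          obtain ⟨e', he', hwe'⟩ := mem_verts_iff.mp hw
          exact mem_verts_iff.mpr ⟨fE e', Finset.mem_image.mpr ⟨e', he', rfl⟩,
            (hfE_mem e' _).mpr ⟨w, hwe', rfl⟩⟩
        rcases hc with rfl | rfl
        · exact hlift u (hq' (Finset.mem_insert_self u {v}))
        · exact hlift v (hq' (by simp))
  have hcard' : M'.card ≤ P'.card + k - 1 := by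
    rw [hM'card, hP'card]
    omega
  -- conclude
  have hfinal : aimG H k + 1 ∈
      {n : ℕ | ∃ N : Finset (Finset V), IsAdmissible (graphEdges G) N k ∧ N.card = n} := by
    refine ⟨M', ⟨hM'match, P', hpartof, hcross, hcard'⟩, ?_⟩
    rw [hM'card, hMcard]
  exact le_csSup (aux_bddAbove _ k) hfinal
end

section
/- Let G be a chordal graph with edge {x,y}, and let G~ be the graph on V(G) \ {x,y} whose edges are the edges of G \ {x,y} together with all pairs {u,v} with u ∈ N_G(x)\{y}, v ∈ N_G(y)\{x}, u ≠ v. Then G~ is weakly chordal: neither G~ nor its complement contains an induced cycle of length ≥ 5. -/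
set_option maxHeartbeats 1000000

open scoped Classical

variable {V : Type*} [DecidableEq V]

/-- `G` has an induced cycle on `n` vertices. -/
def HasInducedCycle {W : Type*} (G : SimpleGraph W) (n : ℕ) : Prop :=
  ∃ f : Fin n → W, Function.Injective f ∧
    ∀ i j : Fin n, G.Adj (f i) (f j) ↔ ((j : ℕ) = ((i : ℕ) + 1) % n ∨ (i : ℕ) = ((j : ℕ) + 1) % n)

/-- A graph is chordal if it has no induced cycle of length at least `4`. -/
def Chordal {W : Type*} (G : SimpleGraph W) : Prop :=
  ∀ n : ℕ, 4 ≤ n → ¬ HasInducedCycle G n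

/-- The graph `G~` associated to the edge `{x,y}` of `G`: its vertices are those of `G`
other than `x, y`; its edges are the edges of `G \ {x,y}` together with all pairs `{u,v}`
with `u ∈ N_G(x) \ {y}`, `v ∈ N_G(y) \ {x}`, `u ≠ v`.  (Here it is realized as a graph
on the vertex set of `G` in which `x` and `y` are isolated.) -/
def tildeGraph (G : SimpleGraph V) (x y : V) : SimpleGraph V :=
  SimpleGraph.fromRel (fun u v =>
    u ≠ x ∧ u ≠ y ∧ v ≠ x ∧ v ≠ y ∧ (G.Adj u v ∨ (G.Adj x u ∧ G.Adj y v)))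

namespace TildeAux


lemma natCast_inj {n a b : ℕ} (hn : 0 < n) (ha : a < n) (hb : b < n) :
    ((a : ZMod n) = (b : ZMod n)) ↔ a = b := by
  haveI : NeZero n := ⟨hn.ne'⟩
  constructor
  · intro h
    have h2 := congrArg ZMod.val h
    rwa [ZMod.val_natCast_of_lt ha, ZMod.val_natCast_of_lt hb] at h2
  · intro h; rw [h]

lemma cast_succ {n : ℕ} (a : ℕ) : ((a : ZMod n)) + 1 = ((a+1 : ℕ) : ZMod n) := by
  push_cast; ring

lemma cast_succ_eq_iff {n a b : ℕ} (hn : 2 ≤ n) (ha : a < n) (hb : b < n) :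
    ((b : ZMod n) = (a : ZMod n) + 1) ↔ (b = a + 1 ∨ (a = n - 1 ∧ b = 0)) := by
  rw [cast_succ]
  rcases Nat.lt_or_ge (a+1) n with h | h
  · rw [natCast_inj (by omega) hb h]; omega
  · have ha1 : a + 1 = n := by omega
    have h0 : ((a+1 : ℕ) : ZMod n) = ((0:ℕ) : ZMod n) := by rw [ha1]; simp
    rw [h0, natCast_inj (by omega) hb (by omega)]
    omega

lemma shift_eq {n : ℕ} (i : ZMod n) (a b : ZMod n) : i + a = i + b ↔ a = b :=
  ⟨fun h => add_left_cancel h, fun h => by rw [h]⟩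

lemma shift_eq_nat {n a b : ℕ} (hn : 0 < n) (ha : a < n) (hb : b < n) (i : ZMod n) :
    i + (a:ℕ) = i + (b:ℕ) ↔ a = b := by rw [shift_eq, natCast_inj hn ha hb]

lemma consec_shift {n a b : ℕ} (hn : 2 ≤ n) (ha : a < n) (hb : b < n) (i : ZMod n) :
    ((i + (b:ℕ) = i + (a:ℕ) + 1) ∨ (i + (a:ℕ) = i + (b:ℕ) + 1)) ↔
      (b = a + 1 ∨ a = b + 1 ∨ (a = n-1 ∧ b = 0) ∨ (b = n-1 ∧ a = 0)) := by
  rw [add_assoc, shift_eq, add_assoc, shift_eq, cast_succ_eq_iff hn ha hb,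
    cast_succ_eq_iff hn hb ha]
  omega

lemma chordal_ring {W : Type*} (G : SimpleGraph W) (hch : Chordal G) (m : ℕ) (hm : 4 ≤ m)
    (g : ℕ → W)
    (hinj : ∀ i j, i < j → j < m → g i ≠ g j)
    (hedge : ∀ k, k + 1 < m → G.Adj (g k) (g (k+1)))
    (hwrap : G.Adj (g (m-1)) (g 0))
    (hnon : ∀ i j, i < j → j < m → j ≠ i + 1 → ¬(i = 0 ∧ j = m - 1) → ¬ G.Adj (g i) (g j)) :
    False := by
  apply hch m hm
  refine ⟨fun i => g i.1, ?_, ?_⟩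
  · intro i j hij
    rcases lt_trichotomy i.1 j.1 with h | h | h
    · exact absurd hij (hinj _ _ h j.2)
    · exact Fin.ext h
    · exact absurd hij.symm (hinj _ _ h i.2)
  · intro i j
    have key : ∀ a b : ℕ, a < m → b < m →
        (G.Adj (g a) (g b) ↔ (b = (a+1) % m ∨ a = (b+1) % m)) := by
      intro a b ha hb
      have hma : (a+1) % m = a + 1 ∨ ((a+1) % m = 0 ∧ a + 1 = m) := by
        rcases Nat.lt_or_ge (a+1) m with h | h
        · exact Or.inl (Nat.mod_eq_of_lt h)
        · have h1 : a + 1 = m := by omega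
          exact Or.inr ⟨by rw [h1, Nat.mod_self], h1⟩
      have hmb : (b+1) % m = b + 1 ∨ ((b+1) % m = 0 ∧ b + 1 = m) := by
        rcases Nat.lt_or_ge (b+1) m with h | h
        · exact Or.inl (Nat.mod_eq_of_lt h)
        · have h1 : b + 1 = m := by omega
          exact Or.inr ⟨by rw [h1, Nat.mod_self], h1⟩
      have hlta : (a+1) % m < m := Nat.mod_lt _ (by omega)
      have hltb : (b+1) % m < m := Nat.mod_lt _ (by omega)
      constructor
      · intro hadj
        by_contra hc
        push_neg at hc
        rcases lt_trichotomy a b with h | h | h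
        · exact hnon a b h hb (by omega) (by omega) hadj
        · subst h; exact G.irrefl hadj
        · exact hnon b a h ha (by omega) (by omega) hadj.symm
      · intro hc
        rcases hc with hc | hc
        · rcases hma with h | h
          · have hb1 : b = a + 1 := by omega
            subst hb1; exact hedge a (by omega)
          · have ha1 : a = m - 1 := by omega
            have hb1 : b = 0 := by omega
            subst ha1; subst hb1; exact hwrap
        · rcases hmb with h | h
          · have ha1 : a = b + 1 := by omega
            subst ha1; exact (hedge b (by omega)).symm
          · have hb1 : b = m - 1 := by omega
            have ha1 : a = 0 := by omega
            subst hb1; subst ha1; exact hwrap.symm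
    exact key i.1 j.1 i.2 j.2

lemma chordal_no_C4 {W : Type*} (G : SimpleGraph W) (hch : Chordal G) (a b c d : W)
    (hab : G.Adj a b) (hbc : G.Adj b c) (hcd : G.Adj c d) (hda : G.Adj d a)
    (hac : ¬ G.Adj a c) (hbd : ¬ G.Adj b d)
    (hac' : a ≠ c) (hbd' : b ≠ d) : False := by
  have nab := hab.ne; have nbc := hbc.ne; have ncd := hcd.ne; have nda := hda.ne'
  apply chordal_ring G hch 4 le_rfl
    (fun k => if k = 0 then a else if k = 1 then b else if k = 2 then c else d)
  · intro i j hij hj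
    interval_cases j <;> interval_cases i <;> simp_all
  · intro k hk
    have hk' : k ≤ 5 := by omega
    interval_cases k <;> simp_all
  · simpa using hda
  · intro i j hij hj h1 h2
    interval_cases j <;> interval_cases i <;> simp_all

lemma chordal_no_C5 {W : Type*} (G : SimpleGraph W) (hch : Chordal G) (a b c d e : W)
    (hab : G.Adj a b) (hbc : G.Adj b c) (hcd : G.Adj c d) (hde : G.Adj d e)
    (hea : G.Adj e a)
    (hac : ¬ G.Adj a c) (had : ¬ G.Adj a d) (hbd : ¬ G.Adj b d) (hbe : ¬ G.Adj b e)
    (hce : ¬ G.Adj c e)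
    (hac' : a ≠ c) (had' : a ≠ d) (hbd' : b ≠ d) (hbe' : b ≠ e) (hce' : c ≠ e) : False := by
  have nab := hab.ne; have nbc := hbc.ne; have ncd := hcd.ne; have nde := hde.ne
  have nea := hea.ne'
  apply chordal_ring G hch 5 (by norm_num)
    (fun k => if k = 0 then a else if k = 1 then b else if k = 2 then c else
      if k = 3 then d else e)
  · intro i j hij hj
    interval_cases j <;> interval_cases i <;> simp_all
  · intro k hk
    have hk' : k ≤ 5 := by omega
    interval_cases k <;> simp_all
  · simpa using hea
  · intro i j hij hj h1 h2
    interval_cases j <;> interval_cases i <;> simp_all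

lemma chordal_no_C6 {W : Type*} (G : SimpleGraph W) (hch : Chordal G) (a b c d e f : W)
    (hab : G.Adj a b) (hbc : G.Adj b c) (hcd : G.Adj c d) (hde : G.Adj d e)
    (hef : G.Adj e f) (hfa : G.Adj f a)
    (hac : ¬ G.Adj a c) (had : ¬ G.Adj a d) (hae : ¬ G.Adj a e)
    (hbd : ¬ G.Adj b d) (hbe : ¬ G.Adj b e) (hbf : ¬ G.Adj b f)
    (hce : ¬ G.Adj c e) (hcf : ¬ G.Adj c f) (hdf : ¬ G.Adj d f)
    (hac' : a ≠ c) (had' : a ≠ d) (hae' : a ≠ e)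
    (hbd' : b ≠ d) (hbe' : b ≠ e) (hbf' : b ≠ f)
    (hce' : c ≠ e) (hcf' : c ≠ f) (hdf' : d ≠ f) : False := by
  have nab := hab.ne; have nbc := hbc.ne; have ncd := hcd.ne; have nde := hde.ne
  have nef := hef.ne; have nfa := hfa.ne'
  apply chordal_ring G hch 6 (by norm_num)
    (fun k => if k = 0 then a else if k = 1 then b else if k = 2 then c else
      if k = 3 then d else if k = 4 then e else f)
  · intro i j hij hj
    interval_cases j <;> interval_cases i <;> simp_all
  · intro k hk
    have hk' : k ≤ 5 := by omega
    interval_cases k <;> simp_all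
  · simpa using hfa
  · intro i j hij hj h1 h2
    interval_cases j <;> interval_cases i <;> simp_all



lemma hic_to_zmod {W : Type*} (G : SimpleGraph W) {n : ℕ} (hn : 2 ≤ n)
    (h : HasInducedCycle G n) :
    ∃ v : ZMod n → W, Function.Injective v ∧
      ∀ i j, G.Adj (v i) (v j) ↔ (j = i + 1 ∨ i = j + 1) := by
  obtain ⟨f, hinj, hadj⟩ := h
  haveI : NeZero n := ⟨by omega⟩
  refine ⟨fun i => f ⟨i.val, ZMod.val_lt i⟩, ?_, ?_⟩
  · intro i j hh
    have h2 := hinj hh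
    have h3 : i.val = j.val := congrArg Fin.val h2
    exact ZMod.val_injective n h3
  · intro i j
    rw [hadj]
    have hv1 : (1 : ZMod n).val = 1 := by
      haveI : Fact (1 < n) := ⟨by omega⟩; exact ZMod.val_one n
    have key : ∀ a b : ZMod n, (b = a + 1 ↔ (b.val : ℕ) = (a.val + 1) % n) := by
      intro a b
      constructor
      · intro hh; rw [hh, ZMod.val_add, hv1]
      · intro hh
        apply ZMod.val_injective n
        rw [ZMod.val_add, hv1]; exact hh
    show ((⟨j.val, _⟩ : Fin n) : ℕ) = (((⟨i.val, _⟩ : Fin n) : ℕ) + 1) % n ∨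
      ((⟨i.val, _⟩ : Fin n) : ℕ) = (((⟨j.val, _⟩ : Fin n) : ℕ) + 1) % n ↔ _
    simp only [Fin.val_mk]
    rw [← key i j, ← key j i]

lemma tadj (G : SimpleGraph V) (x y : V) {a b : V}
    (hax : a ≠ x) (hay : a ≠ y) (hbx : b ≠ x) (hby : b ≠ y) :
    (tildeGraph G x y).Adj a b ↔
      a ≠ b ∧ (G.Adj a b ∨ (G.Adj x a ∧ G.Adj y b) ∨ (G.Adj x b ∧ G.Adj y a)) := by
  unfold tildeGraph
  rw [SimpleGraph.fromRel_adj]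
  constructor
  · rintro ⟨hne, h | h⟩
    · exact ⟨hne, h.2.2.2.2.elim (fun h' => Or.inl h') (fun h' => Or.inr (Or.inl h'))⟩
    · refine ⟨hne, h.2.2.2.2.elim (fun h' => Or.inl h'.symm) (fun h' => Or.inr (Or.inr h'))⟩
  · rintro ⟨hne, h | h | h⟩
    · exact ⟨hne, Or.inl ⟨hax, hay, hbx, hby, Or.inl h⟩⟩
    · exact ⟨hne, Or.inl ⟨hax, hay, hbx, hby, Or.inr h⟩⟩
    · exact ⟨hne, Or.inr ⟨hbx, hby, hax, hay, Or.inr h⟩⟩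



lemma claim1main (G : SimpleGraph V) (x y : V) (hch : Chordal G) (hxy : G.Adj x y)
    (n : ℕ) (hn : 5 ≤ n) (v : ZMod n → V)
    (hinj : Function.Injective v)
    (hnex : ∀ i, v i ≠ x) (hney : ∀ i, v i ≠ y)
    (hadj : ∀ i j, (tildeGraph G x y).Adj (v i) (v j) ↔ (j = i + 1 ∨ i = j + 1))
    (h0 : G.Adj x (v 0)) (h1 : G.Adj y (v 1)) (h01 : ¬ G.Adj (v 0) (v 1)) : False := by
  haveI : NeZero n := ⟨by omega⟩
  set W : ℕ → V := fun s => v ((s : ℕ) : ZMod n) with hWdef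
  have c0 : ((0:ℕ) : ZMod n) = 0 := by push_cast; rfl
  have c1 : ((1:ℕ) : ZMod n) = 1 := by push_cast; rfl
  have c2 : ((2:ℕ) : ZMod n) = 2 := by push_cast; rfl
  have consec_cast : ∀ a b : ℕ, a < n → b < n →
      (((b:ZMod n) = (a:ZMod n) + 1 ∨ (a:ZMod n) = (b:ZMod n) + 1) ↔
        (b = a+1 ∨ a = b+1 ∨ (a = n-1 ∧ b = 0) ∨ (b = n-1 ∧ a = 0))) := by
    intro a b ha hb
    rw [cast_succ_eq_iff (by omega) ha hb, cast_succ_eq_iff (by omega) hb ha]; omega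
  have tnadj : ∀ i j : ZMod n, i ≠ j → ¬(j = i+1 ∨ i = j+1) →
      ¬ G.Adj (v i) (v j) ∧ ¬(G.Adj x (v i) ∧ G.Adj y (v j)) ∧
        ¬(G.Adj x (v j) ∧ G.Adj y (v i)) := by
    intro i j hij hnc
    have hT : ¬ (tildeGraph G x y).Adj (v i) (v j) := fun hT => hnc ((hadj i j).1 hT)
    rw [tadj G x y (hnex i) (hney i) (hnex j) (hney j)] at hT
    push_neg at hT
    have h2 := hT (fun he => hij (hinj he))
    tauto
  have tcons : ∀ i : ZMod n, G.Adj (v i) (v (i+1)) ∨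
      (G.Adj x (v i) ∧ G.Adj y (v (i+1))) ∨ (G.Adj x (v (i+1)) ∧ G.Adj y (v i)) := by
    intro i
    have hT := (hadj i (i+1)).2 (Or.inl rfl)
    rw [tadj G x y (hnex i) (hney i) (hnex _) (hney _)] at hT
    exact hT.2
  -- membership facts
  have hA : ∀ k : ZMod n, G.Adj x (v k) → k = 0 ∨ k = 1 ∨ k = 2 := by
    intro k hk
    by_contra hc
    push_neg at hc
    obtain ⟨hc0, hc1, hc2⟩ := hc
    have hnc : ¬((1:ZMod n) = k+1 ∨ k = 1+1) := by
      rintro (h | h)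
      · exact hc0 (by linear_combination -h)
      · exact hc2 (by linear_combination h)
    have := (tnadj k 1 hc1 hnc).2.1
    exact this ⟨hk, h1⟩
  have hB : ∀ k : ZMod n, G.Adj y (v k) → k = 0 ∨ k = 1 ∨ k = -1 := by
    intro k hk
    by_contra hc
    push_neg at hc
    obtain ⟨hc0, hc1, hc2⟩ := hc
    have hnc : ¬(k = (0:ZMod n)+1 ∨ (0:ZMod n) = k+1) := by
      rintro (h | h)
      · exact hc1 (by linear_combination h)
      · exact hc2 (by linear_combination -h)
    have := (tnadj 0 k (fun h => hc0 h.symm) hnc).2.1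
    exact this ⟨h0, hk⟩
  -- nat versions
  have cm1 : ((n-1:ℕ) : ZMod n) = -1 := by
    have h2 : ((n-1:ℕ) : ZMod n) + 1 = 0 := by
      rw [cast_succ, show n-1+1 = n by omega]; exact ZMod.natCast_self n
    linear_combination h2
  have hA' : ∀ k, k < n → G.Adj x (W k) → k = 0 ∨ k = 1 ∨ k = 2 := by
    intro k hk h
    rcases hA _ h with h' | h' | h'
    · rw [← c0] at h'; left; exact (natCast_inj (by omega) hk (by omega)).1 h'
    · rw [← c1] at h'; right; left; exact (natCast_inj (by omega) hk (by omega)).1 h'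
    · rw [← c2] at h'; right; right; exact (natCast_inj (by omega) hk (by omega)).1 h'
  have hB' : ∀ k, k < n → G.Adj y (W k) → k = 0 ∨ k = 1 ∨ k = n-1 := by
    intro k hk h
    rcases hB _ h with h' | h' | h'
    · rw [← c0] at h'; left; exact (natCast_inj (by omega) hk (by omega)).1 h'
    · rw [← c1] at h'; right; left; exact (natCast_inj (by omega) hk (by omega)).1 h'
    · rw [← cm1] at h'; right; right; exact (natCast_inj (by omega) hk (by omega)).1 h'
  have hChain : ∀ k, 2 ≤ k → k + 1 ≤ n-1 → G.Adj (W k) (W (k+1)) := by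
    intro k hk2 hk1
    rcases tcons ((k:ℕ) : ZMod n) with h | h | h
    · rwa [cast_succ] at h
    · exfalso
      rcases hA' k (by omega) h.1 with h' | h' | h'
      · omega
      · omega
      · subst h'
        have := h.2
        rw [cast_succ] at this
        rcases hB' 3 (by omega) this with h'' | h'' | h'' <;> omega
    · exfalso
      have := h.1
      rw [cast_succ] at this
      rcases hA' (k+1) (by omega) this with h' | h' | h' <;> omega
  have hNon : ∀ a b, a < n → b < n → a ≠ b →
      ¬(b = a+1 ∨ a = b+1 ∨ (a = n-1 ∧ b = 0) ∨ (b = n-1 ∧ a = 0)) →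
      ¬ G.Adj (W a) (W b) := by
    intro a b ha hb hab hnc
    have h2 := (tnadj ((a:ℕ):ZMod n) ((b:ℕ):ZMod n)
      (fun h => hab ((natCast_inj (by omega) ha hb).1 h))
      (fun h => hnc ((consec_cast a b ha hb).1 h))).1
    exact h2
  have Winj : ∀ a b, a < n → b < n → W a = W b → a = b := by
    intro a b ha hb h
    exact (natCast_inj (by omega) ha hb).1 (hinj h)
  have hx0 : G.Adj x (W 0) := by rw [hWdef]; simpa [c0] using h0
  have hy1 : G.Adj y (W 1) := by rw [hWdef]; simpa [c1] using h1
  have f0 : ¬ G.Adj (W 0) (W 1) := by rw [hWdef]; simpa [c0, c1] using h01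
  have alpha : G.Adj (W 1) (W 2) ∨ G.Adj x (W 2) := by
    rcases tcons ((1:ℕ) : ZMod n) with h | h | h
    · left; rwa [cast_succ] at h
    · exfalso
      have := h.2
      rw [cast_succ] at this
      rcases hB' 2 (by omega) this with h' | h' | h' <;> omega
    · right; rw [cast_succ] at h; exact h.1
  have beta : G.Adj (W (n-1)) (W 0) ∨ G.Adj y (W (n-1)) := by
    have e : ((n-1:ℕ) : ZMod n) + 1 = ((0:ℕ) : ZMod n) := by
      rw [cast_succ, show n-1+1 = n by omega]; simp
    rcases tcons ((n-1:ℕ) : ZMod n) with h | h | h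
    · left; rwa [e] at h
    · exfalso
      rcases hA' (n-1) (by omega) h.1 with h' | h' | h' <;> omega
    · right; rw [e] at h; exact h.2
  -- the case analysis
  by_cases hx2 : G.Adj x (W 2)
  · by_cases hyn : G.Adj y (W (n-1))
    · -- C1 : cycle [y, x, W 2, ..., W (n-1)]
      set g : ℕ → V := fun k => if k = 0 then y else if k = 1 then x else W k with hg
      have g0 : g 0 = y := rfl
      have g1 : g 1 = x := rfl
      have gk : ∀ k, 2 ≤ k → g k = W k := by
        intro k hk; simp only [hg]; rw [if_neg (by omega), if_neg (by omega)]
      apply chordal_ring G hch n (by omega) g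
      · intro i j hij hj
        obtain rfl | rfl | hi2 : i = 0 ∨ i = 1 ∨ 2 ≤ i := by omega
        · obtain rfl | hj2 : j = 1 ∨ 2 ≤ j := by omega
          · rw [g0, g1]; exact hxy.ne'
          · rw [g0, gk j hj2]; exact (hney _).symm
        · have hj2 : 2 ≤ j := by omega
          rw [g1, gk j hj2]; exact (hnex _).symm
        · rw [gk i hi2, gk j (by omega)]
          intro h; have := Winj i j (by omega) hj h; omega
      · intro k hk
        obtain rfl | rfl | hk2 : k = 0 ∨ k = 1 ∨ 2 ≤ k := by omega
        · rw [g0, g1]; exact hxy.symm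
        · rw [g1, gk 2 (by omega)]; exact hx2
        · rw [gk k hk2, gk (k+1) (by omega)]; exact hChain k hk2 (by omega)
      · rw [gk (n-1) (by omega), g0]; exact hyn.symm
      · intro i j hij hj hc1 hc2
        obtain rfl | rfl | hi2 : i = 0 ∨ i = 1 ∨ 2 ≤ i := by omega
        · have hj2 : 2 ≤ j := by omega
          rw [g0, gk j hj2]
          intro h
          rcases hB' j (by omega) h with h' | h' | h' <;> omega
        · have hj2 : 3 ≤ j := by omega
          rw [g1, gk j (by omega)]
          intro h
          rcases hA' j (by omega) h with h' | h' | h' <;> omega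
        · rw [gk i hi2, gk j (by omega)]
          exact hNon i j (by omega) (by omega) (by omega) (by omega)
    · -- C2 : cycle [W 0, x, W 2, ..., W (n-1)]
      have e1 : G.Adj (W (n-1)) (W 0) := beta.resolve_right hyn
      set g : ℕ → V := fun k => if k = 1 then x else W k with hg
      have g0 : g 0 = W 0 := rfl
      have g1 : g 1 = x := rfl
      have gk : ∀ k, 2 ≤ k → g k = W k := by
        intro k hk; simp only [hg]; rw [if_neg (by omega)]
      apply chordal_ring G hch n (by omega) g
      · intro i j hij hj
        obtain rfl | rfl | hi2 : i = 0 ∨ i = 1 ∨ 2 ≤ i := by omega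
        · obtain rfl | hj2 : j = 1 ∨ 2 ≤ j := by omega
          · rw [g0, g1]; exact hnex _
          · rw [g0, gk j hj2]
            intro h; have := Winj 0 j (by omega) hj h; omega
        · have hj2 : 2 ≤ j := by omega
          rw [g1, gk j hj2]; exact (hnex _).symm
        · rw [gk i hi2, gk j (by omega)]
          intro h; have := Winj i j (by omega) hj h; omega
      · intro k hk
        obtain rfl | rfl | hk2 : k = 0 ∨ k = 1 ∨ 2 ≤ k := by omega
        · rw [g0, g1]; exact hx0.symm
        · rw [g1, gk 2 (by omega)]; exact hx2
        · rw [gk k hk2, gk (k+1) (by omega)]; exact hChain k hk2 (by omega)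
      · rw [gk (n-1) (by omega), g0]; exact e1
      · intro i j hij hj hc1 hc2
        obtain rfl | rfl | hi2 : i = 0 ∨ i = 1 ∨ 2 ≤ i := by omega
        · have hj2 : 2 ≤ j := by omega
          rw [g0, gk j hj2]
          exact hNon 0 j (by omega) (by omega) (by omega) (by omega)
        · have hj2 : 3 ≤ j := by omega
          rw [g1, gk j (by omega)]
          intro h
          rcases hA' j (by omega) h with h' | h' | h' <;> omega
        · rw [gk i hi2, gk j (by omega)]
          exact hNon i j (by omega) (by omega) (by omega) (by omega)
  · have e0 : G.Adj (W 1) (W 2) := alpha.resolve_right hx2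
    by_cases hyn : G.Adj y (W (n-1))
    · -- C3 : cycle [y, W 1, W 2, ..., W (n-1)]
      set g : ℕ → V := fun k => if k = 0 then y else W k with hg
      have g0 : g 0 = y := rfl
      have gk : ∀ k, 1 ≤ k → g k = W k := by
        intro k hk; simp only [hg]; rw [if_neg (by omega)]
      apply chordal_ring G hch n (by omega) g
      · intro i j hij hj
        obtain rfl | hi1 : i = 0 ∨ 1 ≤ i := by omega
        · rw [g0, gk j (by omega)]; exact (hney _).symm
        · rw [gk i hi1, gk j (by omega)]
          intro h; have := Winj i j (by omega) hj h; omega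
      · intro k hk
        obtain rfl | rfl | hk2 : k = 0 ∨ k = 1 ∨ 2 ≤ k := by omega
        · rw [g0, gk 1 (by omega)]; exact hy1
        · rw [gk 1 (by omega), gk 2 (by omega)]; exact e0
        · rw [gk k (by omega), gk (k+1) (by omega)]; exact hChain k hk2 (by omega)
      · rw [gk (n-1) (by omega), g0]; exact hyn.symm
      · intro i j hij hj hc1 hc2
        obtain rfl | hi1 : i = 0 ∨ 1 ≤ i := by omega
        · have hj2 : 2 ≤ j := by omega
          rw [g0, gk j (by omega)]
          intro h
          rcases hB' j (by omega) h with h' | h' | h' <;> omega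
        · rw [gk i hi1, gk j (by omega)]
          exact hNon i j (by omega) (by omega) (by omega) (by omega)
    · have e1 : G.Adj (W (n-1)) (W 0) := beta.resolve_right hyn
      by_cases hx1 : G.Adj x (W 1)
      · -- C4a : cycle [x, W 1, ..., W (n-1), W 0], length n+1
        set g : ℕ → V := fun k => if k = 0 then x else if k = n then W 0 else W k with hg
        have g0 : g 0 = x := rfl
        have gn : g n = W 0 := by simp only [hg]; rw [if_neg (by omega)]; simp
        have gk : ∀ k, 1 ≤ k → k ≤ n-1 → g k = W k := by
          intro k hk1 hk2; simp only [hg]; rw [if_neg (by omega), if_neg (by omega)]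
        apply chordal_ring G hch (n+1) (by omega) g
        · intro i j hij hj
          obtain rfl | hi1 : i = 0 ∨ 1 ≤ i := by omega
          · obtain rfl | hj1 : j = n ∨ j ≤ n-1 := by omega
            · rw [g0, gn]; exact (hnex _).symm
            · rw [g0, gk j (by omega) hj1]; exact (hnex _).symm
          · obtain rfl | hj1 : j = n ∨ j ≤ n-1 := by omega
            · rw [gk i hi1 (by omega), gn]
              intro h; have := Winj i 0 (by omega) (by omega) h; omega
            · rw [gk i hi1 (by omega), gk j (by omega) hj1]
              intro h; have := Winj i j (by omega) (by omega) h; omega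
        · intro k hk
          obtain rfl | rfl | hk2 : k = 0 ∨ k = n-1 ∨ (1 ≤ k ∧ k + 1 ≤ n-1) := by omega
          · rw [g0, gk 1 (by omega) (by omega)]; exact hx1
          · rw [gk (n-1) (by omega) (by omega), show n-1+1 = n by omega, gn]; exact e1
          · obtain rfl | hk3 : k = 1 ∨ 2 ≤ k := by omega
            · rw [gk 1 (by omega) (by omega), gk 2 (by omega) (by omega)]; exact e0
            · rw [gk k (by omega) (by omega), gk (k+1) (by omega) (by omega)]
              exact hChain k hk3 (by omega)
        · rw [show n+1-1 = n by omega, gn, g0]; exact hx0.symm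
        · intro i j hij hj hc1 hc2
          obtain rfl | hi1 : i = 0 ∨ 1 ≤ i := by omega
          · have hj2 : 2 ≤ j ∧ j ≤ n-1 := by omega
            rw [g0, gk j (by omega) hj2.2]
            intro h
            rcases hA' j (by omega) h with h' | h' | h'
            · omega
            · omega
            · subst h'; exact hx2 h
          · obtain rfl | hj1 : j = n ∨ j ≤ n-1 := by omega
            · obtain rfl | hi2 : i = 1 ∨ 2 ≤ i := by omega
              · rw [gk 1 (by omega) (by omega), gn]
                intro h; exact f0 h.symm
              · rw [gk i (by omega) (by omega), gn]
                exact hNon i 0 (by omega) (by omega) (by omega) (by omega)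
            · rw [gk i hi1 (by omega), gk j (by omega) hj1]
              exact hNon i j (by omega) (by omega) (by omega) (by omega)
      · by_cases hy0 : G.Adj y (W 0)
        · -- C4b : cycle [y, W 1, ..., W (n-1), W 0], length n+1
          set g : ℕ → V := fun k => if k = 0 then y else if k = n then W 0 else W k with hg
          have g0 : g 0 = y := rfl
          have gn : g n = W 0 := by simp only [hg]; rw [if_neg (by omega)]; simp
          have gk : ∀ k, 1 ≤ k → k ≤ n-1 → g k = W k := by
            intro k hk1 hk2; simp only [hg]; rw [if_neg (by omega), if_neg (by omega)]
          apply chordal_ring G hch (n+1) (by omega) g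
          · intro i j hij hj
            obtain rfl | hi1 : i = 0 ∨ 1 ≤ i := by omega
            · obtain rfl | hj1 : j = n ∨ j ≤ n-1 := by omega
              · rw [g0, gn]; exact (hney _).symm
              · rw [g0, gk j (by omega) hj1]; exact (hney _).symm
            · obtain rfl | hj1 : j = n ∨ j ≤ n-1 := by omega
              · rw [gk i hi1 (by omega), gn]
                intro h; have := Winj i 0 (by omega) (by omega) h; omega
              · rw [gk i hi1 (by omega), gk j (by omega) hj1]
                intro h; have := Winj i j (by omega) (by omega) h; omega
          · intro k hk
            obtain rfl | rfl | hk2 : k = 0 ∨ k = n-1 ∨ (1 ≤ k ∧ k + 1 ≤ n-1) := by omega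
            · rw [g0, gk 1 (by omega) (by omega)]; exact hy1
            · rw [gk (n-1) (by omega) (by omega), show n-1+1 = n by omega, gn]; exact e1
            · obtain rfl | hk3 : k = 1 ∨ 2 ≤ k := by omega
              · rw [gk 1 (by omega) (by omega), gk 2 (by omega) (by omega)]; exact e0
              · rw [gk k (by omega) (by omega), gk (k+1) (by omega) (by omega)]
                exact hChain k hk3 (by omega)
          · rw [show n+1-1 = n by omega, gn, g0]; exact hy0.symm
          · intro i j hij hj hc1 hc2
            obtain rfl | hi1 : i = 0 ∨ 1 ≤ i := by omega
            · have hj2 : 2 ≤ j ∧ j ≤ n-1 := by omega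
              rw [g0, gk j (by omega) hj2.2]
              intro h
              rcases hB' j (by omega) h with h' | h' | h'
              · omega
              · omega
              · subst h'; exact hyn h
            · obtain rfl | hj1 : j = n ∨ j ≤ n-1 := by omega
              · obtain rfl | hi2 : i = 1 ∨ 2 ≤ i := by omega
                · rw [gk 1 (by omega) (by omega), gn]
                  intro h; exact f0 h.symm
                · rw [gk i (by omega) (by omega), gn]
                  exact hNon i 0 (by omega) (by omega) (by omega) (by omega)
              · rw [gk i hi1 (by omega), gk j (by omega) hj1]
                exact hNon i j (by omega) (by omega) (by omega) (by omega)
        · -- C4c : cycle [x, y, W 1, ..., W (n-1), W 0], length n+2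
          set g : ℕ → V := fun k => if k = 0 then x else if k = 1 then y else
            if k = n+1 then W 0 else W (k-1) with hg
          have g0 : g 0 = x := rfl
          have g1 : g 1 = y := rfl
          have gn : g (n+1) = W 0 := by
            simp only [hg]; rw [if_neg (by omega), if_neg (by omega)]; simp
          have gk : ∀ k, 2 ≤ k → k ≤ n → g k = W (k-1) := by
            intro k hk1 hk2
            simp only [hg]; rw [if_neg (by omega), if_neg (by omega), if_neg (by omega)]
          apply chordal_ring G hch (n+2) (by omega) g
          · intro i j hij hj
            obtain rfl | rfl | hi2 : i = 0 ∨ i = 1 ∨ 2 ≤ i := by omega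
            · obtain rfl | rfl | hj2 : j = 1 ∨ j = n+1 ∨ (2 ≤ j ∧ j ≤ n) := by omega
              · rw [g0, g1]; exact hxy.ne
              · rw [g0, gn]; exact (hnex _).symm
              · rw [g0, gk j hj2.1 hj2.2]; exact (hnex _).symm
            · obtain rfl | hj2 : j = n+1 ∨ (2 ≤ j ∧ j ≤ n) := by omega
              · rw [g1, gn]; exact (hney _).symm
              · rw [g1, gk j hj2.1 hj2.2]; exact (hney _).symm
            · obtain rfl | hj2 : j = n+1 ∨ (2 ≤ j ∧ j ≤ n) := by omega
              · rw [gk i hi2 (by omega), gn]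
                intro h; have := Winj (i-1) 0 (by omega) (by omega) h; omega
              · rw [gk i hi2 (by omega), gk j hj2.1 hj2.2]
                intro h; have := Winj (i-1) (j-1) (by omega) (by omega) h; omega
          · intro k hk
            obtain rfl | rfl | rfl | hkn | hk2 :
                k = 0 ∨ k = 1 ∨ k = 2 ∨ k = n ∨ (3 ≤ k ∧ k + 1 ≤ n) := by omega
            · rw [g0, g1]; exact hxy
            · rw [g1, gk 2 (by omega) (by omega)]; exact hy1
            · rw [gk 2 (by omega) (by omega), gk 3 (by omega) (by omega)]; exact e0
            · rw [hkn, gk n (by omega) (by omega), gn]; exact e1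
            · rw [gk k (by omega) (by omega), gk (k+1) (by omega) (by omega),
                show k+1-1 = k-1+1 by omega]
              exact hChain (k-1) (by omega) (by omega)
          · rw [show n+2-1 = n+1 by omega, gn, g0]; exact hx0.symm
          · intro i j hij hj hc1 hc2
            obtain rfl | rfl | hi2 : i = 0 ∨ i = 1 ∨ 2 ≤ i := by omega
            · have hj2 : 2 ≤ j ∧ j ≤ n := by omega
              rw [g0, gk j hj2.1 hj2.2]
              intro h
              rcases hA' (j-1) (by omega) h with h' | h' | h'
              · omega
              · have : j = 2 := by omega
                subst this; exact hx1 h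
              · have : j = 3 := by omega
                subst this; exact hx2 h
            · obtain rfl | hj2 : j = n+1 ∨ (3 ≤ j ∧ j ≤ n) := by omega
              · rw [g1, gn]; exact hy0
              · rw [g1, gk j (by omega) hj2.2]
                intro h
                rcases hB' (j-1) (by omega) h with h' | h' | h'
                · omega
                · omega
                · have : j = n := by omega
                  subst this; exact hyn h
            · obtain rfl | hj2 : j = n+1 ∨ (2 ≤ j ∧ j ≤ n) := by omega
              · obtain rfl | hi3 : i = 2 ∨ 3 ≤ i := by omega
                · rw [gk 2 (by omega) (by omega), gn]
                  intro h; exact f0 h.symm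
                · rw [gk i (by omega) (by omega), gn]
                  exact hNon (i-1) 0 (by omega) (by omega) (by omega) (by omega)
              · rw [gk i hi2 (by omega), gk j hj2.1 hj2.2]
                exact hNon (i-1) (j-1) (by omega) (by omega) (by omega) (by omega)



lemma claim1core (G : SimpleGraph V) (x y : V) (hch : Chordal G) (hxy : G.Adj x y)
    (n : ℕ) (hn : 5 ≤ n) (v : ZMod n → V)
    (hinj : Function.Injective v)
    (hnex : ∀ i, v i ≠ x) (hney : ∀ i, v i ≠ y)
    (hadj : ∀ i j, (tildeGraph G x y).Adj (v i) (v j) ↔ (j = i + 1 ∨ i = j + 1)) :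
    False := by
  haveI : NeZero n := ⟨by omega⟩
  have consec_cast : ∀ a b : ℕ, a < n → b < n →
      (((b:ZMod n) = (a:ZMod n) + 1 ∨ (a:ZMod n) = (b:ZMod n) + 1) ↔
        (b = a+1 ∨ a = b+1 ∨ (a = n-1 ∧ b = 0) ∨ (b = n-1 ∧ a = 0))) := by
    intro a b ha hb
    rw [cast_succ_eq_iff (by omega) ha hb, cast_succ_eq_iff (by omega) hb ha]; omega
  by_cases hall : ∀ k : ZMod n, G.Adj (v k) (v (k+1))
  · apply chordal_ring G hch n (by omega) (fun k => v ((k:ℕ) : ZMod n))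
    · intro i j hij hj hne
      have h2 := hinj hne
      have := (natCast_inj (by omega) (by omega : i < n) hj).1 h2
      omega
    · intro k hk
      have := hall ((k:ℕ) : ZMod n)
      rwa [cast_succ] at this
    · have := hall ((n-1 : ℕ) : ZMod n)
      rw [cast_succ] at this
      have h2 : ((n-1+1:ℕ) : ZMod n) = ((0:ℕ) : ZMod n) := by
        rw [show n-1+1 = n by omega]; simp
      rwa [h2] at this
    · intro i j hij hj h1 h2
      intro hGadj
      have hvne : v ((i:ℕ) : ZMod n) ≠ v ((j:ℕ) : ZMod n) := hGadj.ne
      have hT : (tildeGraph G x y).Adj (v ((i:ℕ):ZMod n)) (v ((j:ℕ):ZMod n)) :=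
        (tadj G x y (hnex _) (hney _) (hnex _) (hney _)).2 ⟨hvne, Or.inl hGadj⟩
      have hc := (hadj _ _).1 hT
      rw [consec_cast i j (by omega) hj] at hc
      omega
  · push_neg at hall
    obtain ⟨k0, hk0⟩ := hall
    have hT := (hadj k0 (k0+1)).2 (Or.inl rfl)
    rw [tadj G x y (hnex _) (hney _) (hnex _) (hney _)] at hT
    rcases hT.2 with hG | hs | hs
    · exact hk0 hG
    · -- rotate : w t = v (k0 + t)
      apply claim1main G x y hch hxy n hn (fun t => v (k0 + t))
      · intro a b h
        have := hinj h
        exact add_left_cancel this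
      · intro i; exact hnex _
      · intro i; exact hney _
      · intro i j
        rw [hadj]
        constructor
        · rintro (h | h)
          · left; linear_combination h
          · right; linear_combination h
        · rintro (h | h)
          · left; linear_combination h
          · right; linear_combination h
      · simpa using hs.1
      · exact hs.2
      · simpa using hk0
    · -- reflect : w t = v (k0 + 1 - t)
      apply claim1main G x y hch hxy n hn (fun t => v (k0 + 1 - t))
      · intro a b h
        have := hinj h
        linear_combination -this
      · intro i; exact hnex _
      · intro i; exact hney _
      · intro i j
        rw [hadj]
        constructor
        · rintro (h | h)
          · right; linear_combination h
          · left; linear_combination h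
        · rintro (h | h)
          · right; linear_combination h
          · left; linear_combination h
      · simpa using hs.1
      · have h2 : k0 + 1 - 1 = k0 := by ring
        rw [h2]; exact hs.2
      · have h2 : k0 + 1 - 1 = k0 := by ring
        have h3 : k0 + 1 - 0 = k0 + 1 := by ring
        rw [h2, h3]
        intro h; exact hk0 h.symm



lemma step3final {W : Type*} (G : SimpleGraph W) (x y : W) (hch : Chordal G)
    (hxy : G.Adj x y) (u z w : W)
    (hxu : G.Adj x u) (hyw : G.Adj y w)
    (hxz : ¬ G.Adj x z) (hyz : ¬ G.Adj y z)
    (huz : G.Adj u z) (hzw : G.Adj z w)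
    (huw : ¬ G.Adj u w) (huw' : u ≠ w)
    (hux : u ≠ x) (huy : u ≠ y) (hwx : w ≠ x) (hwy : w ≠ y)
    (hzx : z ≠ x) (hzy : z ≠ y) : False := by
  by_cases hyu : G.Adj y u
  · exact chordal_no_C4 G hch y u z w hyu huz hzw hyw.symm hyz huw hzy.symm huw'
  · by_cases hxw : G.Adj x w
    · exact chordal_no_C4 G hch x u z w hxu huz hzw hxw.symm hxz huw hzx.symm huw'
    · exact chordal_no_C5 G hch x u z w y hxu huz hzw hyw.symm hxy.symm
        hxz hxw huw (fun h => hyu h.symm) (fun h => hyz h.symm)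
        hzx.symm hwx.symm huw' huy hzy

lemma step5final {W : Type*} (G : SimpleGraph W) (x y : W) (hch : Chordal G)
    (hxy : G.Adj x y) (u z z' w : W)
    (hxu : G.Adj x u) (hyw : G.Adj y w)
    (hxz : ¬ G.Adj x z) (hyz : ¬ G.Adj y z) (hxz' : ¬ G.Adj x z') (hyz' : ¬ G.Adj y z')
    (huz : G.Adj u z) (hzz' : G.Adj z z') (hz'w : G.Adj z' w)
    (huz' : ¬ G.Adj u z') (huw : ¬ G.Adj u w) (hzw : ¬ G.Adj z w)
    (hne_uz' : u ≠ z') (hne_uw : u ≠ w) (hne_zw : z ≠ w)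
    (hux : u ≠ x) (huy : u ≠ y) (hwx : w ≠ x) (hwy : w ≠ y)
    (hzx : z ≠ x) (hzy : z ≠ y) (hz'x : z' ≠ x) (hz'y : z' ≠ y) : False := by
  by_cases hyu : G.Adj y u
  · exact chordal_no_C5 G hch y u z z' w hyu huz hzz' hz'w hyw.symm
      hyz hyz' huz' huw hzw hzy.symm hz'y.symm hne_uz' hne_uw hne_zw
  · by_cases hxw : G.Adj x w
    · exact chordal_no_C5 G hch x u z z' w hxu huz hzz' hz'w hxw.symm
        hxz hxz' huz' huw hzw hzx.symm hz'x.symm hne_uz' hne_uw hne_zw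
    · exact chordal_no_C6 G hch x u z z' w y hxu huz hzz' hz'w hyw.symm hxy.symm
        hxz hxz' hxw huz' huw (fun h => hyu h.symm) hzw (fun h => hyz h.symm)
        (fun h => hyz' h.symm)
        hzx.symm hz'x.symm hwx.symm hne_uz' hne_uw huy hne_zw hzy hz'y

lemma claim2caseA (G : SimpleGraph V) (x y : V) (hch : Chordal G) (hxy : G.Adj x y)
    (n : ℕ) (hn : 6 ≤ n) (v : ZMod n → V)
    (hinj : Function.Injective v)
    (hnex : ∀ i, v i ≠ x) (hney : ∀ i, v i ≠ y)
    (hsplit : ∀ i j : ZMod n, i ≠ j → ¬(j = i+1 ∨ i = j+1) →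
      G.Adj (v i) (v j) ∨ (G.Adj x (v i) ∧ G.Adj y (v j)) ∨ (G.Adj x (v j) ∧ G.Adj y (v i)))
    (hcons : ∀ i : ZMod n, ¬ G.Adj (v i) (v (i+1)) ∧
      ¬(G.Adj x (v i) ∧ G.Adj y (v (i+1))) ∧ ¬(G.Adj x (v (i+1)) ∧ G.Adj y (v i)))
    (i : ZMod n) (d : ℕ) (hd2 : 2 ≤ d) (hdn : d ≤ n-2)
    (hxi : G.Adj x (v i)) (hyj : G.Adj y (v (i + ((d:ℕ) : ZMod n))))
    (h1 : ¬G.Adj x (v (i + ((1:ℕ) : ZMod n))) ∧ ¬G.Adj y (v (i + ((1:ℕ) : ZMod n))))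
    (h2 : ¬G.Adj x (v (i + ((n-1:ℕ) : ZMod n))) ∧ ¬G.Adj y (v (i + ((n-1:ℕ) : ZMod n))))
    (hOnly : ∀ k : ZMod n, ¬G.Adj x (v k) → ¬G.Adj y (v k) →
      k = i + ((1:ℕ) : ZMod n) ∨ k = i + ((n-1:ℕ) : ZMod n)) : False := by
  haveI : NeZero n := ⟨by omega⟩
  set P : ℕ → V := fun s => v (i + ((s:ℕ) : ZMod n)) with hP
  have shift_succ : ∀ a : ℕ, (i + ((a:ℕ) : ZMod n)) + 1 = i + (((a+1:ℕ)) : ZMod n) := by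
    intro a; rw [add_assoc, cast_succ]
  have shift_eq_iff : ∀ a b : ℕ, a < n → b < n →
      ((i + ((a:ℕ):ZMod n) = i + ((b:ℕ):ZMod n)) ↔ a = b) := by
    intro a b ha hb
    constructor
    · intro h; exact (natCast_inj (by omega) ha hb).1 (add_left_cancel h)
    · intro h; rw [h]
  have shift_cons_iff : ∀ a b : ℕ, a < n → b < n →
      ((i + ((b:ℕ):ZMod n) = (i + ((a:ℕ):ZMod n)) + 1 ∨
        i + ((a:ℕ):ZMod n) = (i + ((b:ℕ):ZMod n)) + 1) ↔
        (b = a+1 ∨ a = b+1 ∨ (a = n-1 ∧ b = 0) ∨ (b = n-1 ∧ a = 0))) := by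
    intro a b ha hb
    have e1 : (i + ((b:ℕ):ZMod n) = (i + ((a:ℕ):ZMod n)) + 1) ↔
        ((b : ZMod n) = (a:ZMod n) + 1) := by
      rw [add_assoc]
      exact ⟨fun h => add_left_cancel h, fun h => by rw [h]⟩
    have e2 : (i + ((a:ℕ):ZMod n) = (i + ((b:ℕ):ZMod n)) + 1) ↔
        ((a : ZMod n) = (b:ZMod n) + 1) := by
      rw [add_assoc]
      exact ⟨fun h => add_left_cancel h, fun h => by rw [h]⟩
    rw [e1, e2, cast_succ_eq_iff (by omega) ha hb, cast_succ_eq_iff (by omega) hb ha]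
    omega
  have P0 : P 0 = v i := by simp [hP]
  have hconsS : ∀ a : ℕ, a + 1 < n →
      (¬G.Adj (P a) (P (a+1)) ∧ ¬(G.Adj x (P a) ∧ G.Adj y (P (a+1))) ∧
        ¬(G.Adj x (P (a+1)) ∧ G.Adj y (P a))) := by
    intro a _
    have hc := hcons (i + ((a:ℕ) : ZMod n))
    rwa [shift_succ a] at hc
  have hconsW : ¬G.Adj (P (n-1)) (P 0) ∧ ¬(G.Adj x (P (n-1)) ∧ G.Adj y (P 0)) ∧
      ¬(G.Adj x (P 0) ∧ G.Adj y (P (n-1))) := by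
    have hc := hcons (i + ((n-1:ℕ) : ZMod n))
    have e : (i + ((n-1:ℕ):ZMod n)) + 1 = i + ((0:ℕ) : ZMod n) := by
      rw [add_assoc, cast_succ, show n-1+1 = n by omega]
      simp
    rwa [e] at hc
  have hxiP : G.Adj x (P 0) := by rw [P0]; exact hxi
  have hyjP : G.Adj y (P d) := hyj
  have hOnlyP : ∀ a : ℕ, a < n → ¬G.Adj x (P a) → ¬G.Adj y (P a) →
      a = 1 ∨ a = n-1 := by
    intro a ha hax hay
    rcases hOnly _ hax hay with h | h
    · left; exact (shift_eq_iff a 1 ha (by omega)).1 h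
    · right; exact (shift_eq_iff a (n-1) ha (by omega)).1 h
  -- base : v j not adjacent to x
  have base : ¬ G.Adj x (P d) := by
    by_contra hxj
    have hno1 : ¬G.Adj y (P (d+1)) := fun h => (hconsS d (by omega)).2.1 ⟨hxj, h⟩
    have hno2 : ¬G.Adj x (P (d+1)) := fun h => (hconsS d (by omega)).2.2 ⟨h, hyjP⟩
    have hk := hOnlyP (d+1) (by omega) hno2 hno1
    have hdn2 : d = n-2 := by omega
    have hcd := hconsS (d-1) (by omega)
    rw [show d-1+1 = d by omega] at hcd
    have hxd1 : ¬G.Adj x (P (d-1)) := fun h => hcd.2.1 ⟨h, hyjP⟩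
    have hyd1 : ¬G.Adj y (P (d-1)) := fun h => hcd.2.2 ⟨hxj, h⟩
    have := hOnlyP (d-1) (by omega) hxd1 hyd1
    omega
  -- propagation upwards
  have up : ∀ s : ℕ, d + s ≤ n-2 → ¬ G.Adj x (P (d+s)) := by
    intro s
    induction s with
    | zero => intro _; simpa using base
    | succ s ih =>
      intro hs
      have ihx := ih (by omega)
      have hyb : G.Adj y (P (d+s)) := by
        by_contra hyb
        have := hOnlyP (d+s) (by omega) ihx hyb
        omega
      intro hx
      have hc := (hconsS (d+s) (by omega)).2.2
      rw [show d+s+1 = d+(s+1) by omega] at hc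
      exact hc ⟨hx, hyb⟩
  have down : ∀ s : ℕ, s ≤ d-2 → ¬ G.Adj x (P (d-s)) := by
    intro s
    induction s with
    | zero => intro _; simpa using base
    | succ s ih =>
      intro hs
      have ihx := ih (by omega)
      have hyb : G.Adj y (P (d-s)) := by
        by_contra hyb
        have := hOnlyP (d-s) (by omega) ihx hyb
        omega
      intro hx
      have hc := hconsS (d-(s+1)) (by omega)
      rw [show d-(s+1)+1 = d-s by omega] at hc
      exact hc.2.1 ⟨hx, hyb⟩
  have NA2 : ¬ G.Adj x (P 2) := by
    rcases Nat.eq_or_lt_of_le hd2 with h | h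
    · rw [← h] at base; exact base
    · have := down (d-2) (by omega)
      rwa [show d-(d-2) = 2 by omega] at this
  have NAn2 : ¬ G.Adj x (P (n-2)) := by
    rcases Nat.eq_or_lt_of_le hdn with h | h
    · rw [h] at base; exact base
    · have := up (n-2-d) (by omega)
      rwa [show d+(n-2-d) = n-2 by omega] at this
  -- the C4 : P 1 - P (n-1) - P 2 - P (n-2) - P 1
  have eab : G.Adj (P 1) (P (n-1)) := by
    rcases hsplit (i + ((1:ℕ):ZMod n)) (i + ((n-1:ℕ):ZMod n))
      (fun h => by have := (shift_eq_iff 1 (n-1) (by omega) (by omega)).1 h; omega)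
      (fun h => by have := (shift_cons_iff 1 (n-1) (by omega) (by omega)).1 h; omega)
      with h | h | h
    · exact h
    · exact absurd h.1 h1.1
    · exact absurd h.1 h2.1
  have ebc : G.Adj (P (n-1)) (P 2) := by
    rcases hsplit (i + ((n-1:ℕ):ZMod n)) (i + ((2:ℕ):ZMod n))
      (fun h => by have := (shift_eq_iff (n-1) 2 (by omega) (by omega)).1 h; omega)
      (fun h => by have := (shift_cons_iff (n-1) 2 (by omega) (by omega)).1 h; omega)
      with h | h | h
    · exact h
    · exact absurd h.1 h2.1
    · exact absurd h.1 NA2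
  have ecd : G.Adj (P 2) (P (n-2)) := by
    rcases hsplit (i + ((2:ℕ):ZMod n)) (i + ((n-2:ℕ):ZMod n))
      (fun h => by have := (shift_eq_iff 2 (n-2) (by omega) (by omega)).1 h; omega)
      (fun h => by have := (shift_cons_iff 2 (n-2) (by omega) (by omega)).1 h; omega)
      with h | h | h
    · exact h
    · exact absurd h.1 NA2
    · exact absurd h.1 NAn2
  have eda : G.Adj (P (n-2)) (P 1) := by
    rcases hsplit (i + ((n-2:ℕ):ZMod n)) (i + ((1:ℕ):ZMod n))
      (fun h => by have := (shift_eq_iff (n-2) 1 (by omega) (by omega)).1 h; omega)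
      (fun h => by have := (shift_cons_iff (n-2) 1 (by omega) (by omega)).1 h; omega)
      with h | h | h
    · exact h
    · exact absurd h.1 NAn2
    · exact absurd h.1 h1.1
  have nac : ¬ G.Adj (P 1) (P 2) := (hconsS 1 (by omega)).1
  have nbd : ¬ G.Adj (P (n-1)) (P (n-2)) := by
    have hc := hconsS (n-2) (by omega)
    rw [show n-2+1 = n-1 by omega] at hc
    exact fun h => hc.1 h.symm
  exact chordal_no_C4 G hch (P 1) (P (n-1)) (P 2) (P (n-2)) eab ebc ecd eda nac nbd
    (fun h => by have := (shift_eq_iff 1 2 (by omega) (by omega)).1 (hinj h); omega)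
    (fun h => by have := (shift_eq_iff (n-1) (n-2) (by omega) (by omega)).1 (hinj h); omega)



lemma claim2A (G : SimpleGraph V) (x y : V) (hch : Chordal G) (hxy : G.Adj x y)
    (n : ℕ) (hn : 6 ≤ n) (v : ZMod n → V)
    (hinj : Function.Injective v)
    (hnex : ∀ i, v i ≠ x) (hney : ∀ i, v i ≠ y)
    (hsplit : ∀ i j : ZMod n, i ≠ j → ¬(j = i+1 ∨ i = j+1) →
      G.Adj (v i) (v j) ∨ (G.Adj x (v i) ∧ G.Adj y (v j)) ∨ (G.Adj x (v j) ∧ G.Adj y (v i)))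
    (hcons : ∀ i : ZMod n, ¬ G.Adj (v i) (v (i+1)) ∧
      ¬(G.Adj x (v i) ∧ G.Adj y (v (i+1))) ∧ ¬(G.Adj x (v (i+1)) ∧ G.Adj y (v i)))
    (i j : ZMod n) (hij : i ≠ j) (hnc : ¬(j = i+1 ∨ i = j+1))
    (hnG : ¬ G.Adj (v i) (v j))
    (hxi : G.Adj x (v i)) (hyj : G.Adj y (v j)) : False := by
  haveI : NeZero n := ⟨by omega⟩
  have c1 : ((1:ℕ) : ZMod n) = 1 := Nat.cast_one
  have ezm : ((n-1:ℕ):ZMod n) + 1 = 0 := by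
    rw [cast_succ, show n-1+1 = n by omega]; exact ZMod.natCast_self n
  have cm1 : ∀ k l : ZMod n, k = l + ((n-1:ℕ):ZMod n) ↔ l = k + 1 := by
    intro k l
    constructor
    · intro h; linear_combination -h - ezm
    · intro h; linear_combination -h - ezm
  set d : ℕ := (j - i).val with hd
  have hjd : j = i + ((d:ℕ) : ZMod n) := by
    rw [hd, ZMod.natCast_zmod_val]; ring
  have hdlt : d < n := ZMod.val_lt _
  have hd0 : d ≠ 0 := by
    intro h0
    apply hij
    have hji : j - i = 0 := by
      have := (ZMod.val_eq_zero (j - i)).1 (by rw [← hd]; exact h0)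
      exact this
    linear_combination -hji
  have hd1 : d ≠ 1 := by
    intro h0; apply hnc; left
    rw [hjd, h0, c1]
  have hdn1 : d ≠ n-1 := by
    intro h0; apply hnc; right
    exact (cm1 j i).1 (by rw [hjd, h0])
  have hd2 : 2 ≤ d := by omega
  have hdn : d ≤ n-2 := by omega
  -- shift helpers
  set P : ℕ → V := fun s => v (i + ((s:ℕ) : ZMod n)) with hP
  have shift_succ : ∀ a : ℕ, (i + ((a:ℕ) : ZMod n)) + 1 = i + (((a+1:ℕ)) : ZMod n) := by
    intro a; rw [add_assoc, cast_succ]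
  have shift_eq_iff : ∀ a b : ℕ, a < n → b < n →
      ((i + ((a:ℕ):ZMod n) = i + ((b:ℕ):ZMod n)) ↔ a = b) := by
    intro a b ha hb
    constructor
    · intro h; exact (natCast_inj (by omega) ha hb).1 (add_left_cancel h)
    · intro h; rw [h]
  have shift_cons_iff : ∀ a b : ℕ, a < n → b < n →
      ((i + ((b:ℕ):ZMod n) = (i + ((a:ℕ):ZMod n)) + 1 ∨
        i + ((a:ℕ):ZMod n) = (i + ((b:ℕ):ZMod n)) + 1) ↔
        (b = a+1 ∨ a = b+1 ∨ (a = n-1 ∧ b = 0) ∨ (b = n-1 ∧ a = 0))) := by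
    intro a b ha hb
    have e1 : (i + ((b:ℕ):ZMod n) = (i + ((a:ℕ):ZMod n)) + 1) ↔
        ((b : ZMod n) = (a:ZMod n) + 1) := by
      rw [add_assoc]
      exact ⟨fun h => add_left_cancel h, fun h => by rw [h]⟩
    have e2 : (i + ((a:ℕ):ZMod n) = (i + ((b:ℕ):ZMod n)) + 1) ↔
        ((a : ZMod n) = (b:ZMod n) + 1) := by
      rw [add_assoc]
      exact ⟨fun h => add_left_cancel h, fun h => by rw [h]⟩
    rw [e1, e2, cast_succ_eq_iff (by omega) ha hb, cast_succ_eq_iff (by omega) hb ha]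
    omega
  have P0 : P 0 = v i := by simp [hP]
  have hconsS : ∀ a : ℕ, a + 1 < n →
      (¬G.Adj (P a) (P (a+1)) ∧ ¬(G.Adj x (P a) ∧ G.Adj y (P (a+1))) ∧
        ¬(G.Adj x (P (a+1)) ∧ G.Adj y (P a))) := by
    intro a _
    have hc := hcons (i + ((a:ℕ) : ZMod n))
    rwa [shift_succ a] at hc
  have hconsW : ¬G.Adj (P (n-1)) (P 0) ∧ ¬(G.Adj x (P (n-1)) ∧ G.Adj y (P 0)) ∧
      ¬(G.Adj x (P 0) ∧ G.Adj y (P (n-1))) := by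
    have hc := hcons (i + ((n-1:ℕ) : ZMod n))
    have e : (i + ((n-1:ℕ):ZMod n)) + 1 = i + ((0:ℕ) : ZMod n) := by
      rw [add_assoc, ezm]
      simp
    rwa [e] at hc
  have hxiP : G.Adj x (P 0) := by rw [P0]; exact hxi
  have hyjP : G.Adj y (P d) := by simp only [hP]; rw [← hjd]; exact hyj
  have hnGP : ¬ G.Adj (P 0) (P d) := by
    rw [P0]; simp only [hP]; rw [← hjd]; exact hnG
  -- Step 3 : an isolated-type vertex far from both i and j
  by_cases h3 : ∃ k : ZMod n, (¬G.Adj x (v k) ∧ ¬G.Adj y (v k)) ∧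
      ¬(k = i+1 ∨ i = k+1) ∧ ¬(j = k+1 ∨ k = j+1) ∧ k ≠ i ∧ k ≠ j
  · obtain ⟨k, ho, hnci, hncj, hki, hkj⟩ := h3
    have hGik : G.Adj (v i) (v k) := by
      rcases hsplit i k (fun h => hki h.symm) hnci with h | h | h
      · exact h
      · exact absurd h.2 ho.2
      · exact absurd h.1 ho.1
    have hGkj : G.Adj (v k) (v j) := by
      rcases hsplit k j hkj hncj with h | h | h
      · exact h
      · exact absurd h.1 ho.1
      · exact absurd h.2 ho.2
    exact step3final G x y hch hxy (v i) (v k) (v j) hxi hyj ho.1 ho.2 hGik hGkj hnG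
      (fun h => hij (hinj h)) (hnex i) (hney i) (hnex j) (hney j) (hnex k) (hney k)
  have ho4 : ∀ k : ZMod n, ¬G.Adj x (v k) → ¬G.Adj y (v k) →
      (k = i+1 ∨ i = k+1) ∨ (j = k+1 ∨ k = j+1) ∨ k = i ∨ k = j := by
    intro k hkx hky
    by_contra hc
    push_neg at hc
    exact h3 ⟨k, ⟨hkx, hky⟩, by tauto, by tauto, by tauto, by tauto⟩
  have hOnat : ∀ a : ℕ, a < n → ¬G.Adj x (P a) → ¬G.Adj y (P a) →
      a = 1 ∨ a = n-1 ∨ a = d-1 ∨ a = d+1 := by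
    intro a ha hax hay
    rcases ho4 (i + ((a:ℕ):ZMod n)) hax hay with (h | h) | (h | h) | h | h
    · left
      have h2 : i + ((a:ℕ):ZMod n) = i + ((1:ℕ):ZMod n) := by rw [c1]; exact h
      exact (shift_eq_iff a 1 ha (by omega)).1 h2
    · right; left
      exact (shift_eq_iff a (n-1) ha (by omega)).1 ((cm1 _ _).2 h)
    · right; right; left
      have h2 : i + ((a+1:ℕ):ZMod n) = i + ((d:ℕ):ZMod n) := by
        rw [← shift_succ a, ← hjd]; exact h.symm
      rcases Nat.lt_or_ge (a+1) n with hlt | hge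
      · have := (shift_eq_iff (a+1) d hlt (by omega)).1 h2; omega
      · exfalso
        have e0 : ((a+1:ℕ):ZMod n) = ((0:ℕ):ZMod n) := by
          rw [show a+1 = n by omega]; simp
        rw [e0] at h2
        have := (shift_eq_iff 0 d (by omega) (by omega)).1 h2; omega
    · right; right; right
      have h2 : i + ((a:ℕ):ZMod n) = i + ((d+1:ℕ):ZMod n) := by
        rw [← shift_succ d, ← hjd]; exact h
      exact (shift_eq_iff a (d+1) ha (by omega)).1 h2
    · exact absurd (show G.Adj x (P a) by
        show G.Adj x (v (i + ((a:ℕ):ZMod n))); rw [h]; exact hxi) hax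
    · exact absurd (show G.Adj y (P a) by
        show G.Adj y (v (i + ((a:ℕ):ZMod n))); rw [h]; exact hyj) hay
  -- forward arc : an o-vertex at offset 1 or d-1
  have hQbase : ¬ G.Adj x (P (d-1)) := by
    have hc := hconsS (d-1) (by omega)
    rw [show d-1+1 = d by omega] at hc
    exact fun h => hc.2.1 ⟨h, hyjP⟩
  have hQex : ∃ t, ¬ G.Adj x (P (t+1)) ∧ t + 1 ≤ d - 1 :=
    ⟨d-2, by rw [show d-2+1 = d-1 by omega]; exact hQbase, by omega⟩
  obtain ⟨t0, ht0, hmin0⟩ : ∃ t0, (¬ G.Adj x (P (t0+1)) ∧ t0 + 1 ≤ d - 1) ∧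
      ∀ m, m < t0 → ¬(¬ G.Adj x (P (m+1)) ∧ m + 1 ≤ d - 1) :=
    ⟨Nat.find hQex, Nat.find_spec hQex, fun m hm => Nat.find_min hQex hm⟩
  have hxaprev : G.Adj x (P t0) := by
    rcases Nat.eq_zero_or_pos t0 with h | h
    · rw [h]; exact hxiP
    · have hm := hmin0 (t0-1) (by omega)
      push_neg at hm
      rw [show t0-1+1 = t0 by omega] at hm
      by_contra hxa
      exact absurd (hm hxa) (by omega)
  have hFo : ¬G.Adj x (P (t0+1)) ∧ ¬G.Adj y (P (t0+1)) :=
    ⟨ht0.1, fun h => (hconsS t0 (by omega)).2.1 ⟨hxaprev, h⟩⟩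
  have hsF := hOnat (t0+1) (by omega) hFo.1 hFo.2
  have hsF' : t0 + 1 = 1 ∨ t0 + 1 = d-1 := by omega
  -- backward arc : an o-vertex at offset d+1 or n-1
  have hRbase : ¬ G.Adj y (P (n-1)) := fun h => hconsW.2.2 ⟨hxiP, h⟩
  have hRex : ∃ t, ¬ G.Adj y (P (d+t+1)) ∧ d+t+1 ≤ n-1 :=
    ⟨n-d-2, by rw [show d+(n-d-2)+1 = n-1 by omega]; exact hRbase, by omega⟩
  obtain ⟨t1, ht1, hmin1⟩ : ∃ t1, (¬ G.Adj y (P (d+t1+1)) ∧ d+t1+1 ≤ n-1) ∧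
      ∀ m, m < t1 → ¬(¬ G.Adj y (P (d+m+1)) ∧ d+m+1 ≤ n-1) :=
    ⟨Nat.find hRex, Nat.find_spec hRex, fun m hm => Nat.find_min hRex hm⟩
  have hybprev : G.Adj y (P (d+t1)) := by
    rcases Nat.eq_zero_or_pos t1 with h | h
    · rw [h]; exact hyjP
    · have hm := hmin1 (t1-1) (by omega)
      push_neg at hm
      rw [show d+(t1-1)+1 = d+t1 by omega] at hm
      by_contra hyb
      exact absurd (hm hyb) (by omega)
  have hBo : ¬G.Adj x (P (d+t1+1)) ∧ ¬G.Adj y (P (d+t1+1)) :=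
    ⟨fun h => (hconsS (d+t1) (by omega)).2.2 ⟨h, hybprev⟩, ht1.1⟩
  have heB := hOnat (d+t1+1) (by omega) hBo.1 hBo.2
  have heB' : d+t1+1 = d+1 ∨ d+t1+1 = n-1 := by omega
  have hFor : (¬G.Adj x (P 1) ∧ ¬G.Adj y (P 1)) ∨
      (¬G.Adj x (P (d-1)) ∧ ¬G.Adj y (P (d-1))) := by
    rcases hsF' with h | h
    · left; rwa [h] at hFo
    · right; rwa [h] at hFo
  have hBor : (¬G.Adj x (P (d+1)) ∧ ¬G.Adj y (P (d+1))) ∨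
      (¬G.Adj x (P (n-1)) ∧ ¬G.Adj y (P (n-1))) := by
    rcases heB' with h | h
    · left; rwa [h] at hBo
    · right; rwa [h] at hBo
  -- edge helpers
  have hedgeO : ∀ a b : ℕ, a < n → b < n → a ≠ b →
      ¬(b = a+1 ∨ a = b+1 ∨ (a = n-1 ∧ b = 0) ∨ (b = n-1 ∧ a = 0)) →
      (¬G.Adj x (P a) ∧ ¬G.Adj y (P a)) → G.Adj (P a) (P b) := by
    intro a b ha hb hne hnc ho
    rcases hsplit (i + ((a:ℕ):ZMod n)) (i + ((b:ℕ):ZMod n))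
      (fun h => hne ((shift_eq_iff a b ha hb).1 h))
      (fun h => hnc ((shift_cons_iff a b ha hb).1 h)) with h | h | h
    · exact h
    · exact absurd h.1 ho.1
    · exact absurd h.2 ho.2
  have hedgeO' : ∀ a b : ℕ, a < n → b < n → a ≠ b →
      ¬(b = a+1 ∨ a = b+1 ∨ (a = n-1 ∧ b = 0) ∨ (b = n-1 ∧ a = 0)) →
      (¬G.Adj x (P b) ∧ ¬G.Adj y (P b)) → G.Adj (P a) (P b) := by
    intro a b ha hb hne hnc ho
    rcases hsplit (i + ((a:ℕ):ZMod n)) (i + ((b:ℕ):ZMod n))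
      (fun h => hne ((shift_eq_iff a b ha hb).1 h))
      (fun h => hnc ((shift_cons_iff a b ha hb).1 h)) with h | h | h
    · exact h
    · exact absurd h.2 ho.2
    · exact absurd h.1 ho.1
  have Pne : ∀ a b : ℕ, a < n → b < n → a ≠ b → P a ≠ P b := by
    intro a b ha hb hne h
    exact hne ((shift_eq_iff a b ha hb).1 (hinj h))
  have huz'1 : ¬G.Adj (P 0) (P 1) := (hconsS 0 (by omega)).1
  have huz'n : ¬G.Adj (P 0) (P (n-1)) := fun h => hconsW.1 h.symm
  have hzw1 : ¬G.Adj (P (d-1)) (P d) := by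
    have hc := hconsS (d-1) (by omega)
    rw [show d-1+1 = d by omega] at hc
    exact hc.1
  have hzw2 : ¬G.Adj (P (d+1)) (P d) := fun h => (hconsS d (by omega)).1 h.symm
  -- step-5 runner
  have step5run : ∀ a b : ℕ, a < n → b < n →
      (¬G.Adj x (P a) ∧ ¬G.Adj y (P a)) → (¬G.Adj x (P b) ∧ ¬G.Adj y (P b)) →
      (0:ℕ) ≠ a → ¬(a = 0+1 ∨ 0 = a+1 ∨ ((0:ℕ) = n-1 ∧ a = 0) ∨ (a = n-1 ∧ (0:ℕ) = 0)) →
      a ≠ b → ¬(b = a+1 ∨ a = b+1 ∨ (a = n-1 ∧ b = 0) ∨ (b = n-1 ∧ a = 0)) →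
      b ≠ d → ¬(d = b+1 ∨ b = d+1 ∨ (b = n-1 ∧ d = 0) ∨ (d = n-1 ∧ b = 0)) →
      (0:ℕ) ≠ b → a ≠ d →
      ¬G.Adj (P 0) (P b) → ¬G.Adj (P a) (P d) → False := by
    intro a b ha hb hoa hob h0a h0anc hab habnc hbd hbdnc h0b had hPb hPad
    exact step5final G x y hch hxy (P 0) (P a) (P b) (P d) hxiP hyjP
      hoa.1 hoa.2 hob.1 hob.2
      (hedgeO' 0 a (by omega) ha h0a h0anc hoa)
      (hedgeO a b ha hb hab habnc hoa)
      (hedgeO b d hb (by omega) hbd hbdnc hob)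
      hPb hnGP hPad
      (Pne 0 b (by omega) hb h0b) (Pne 0 d (by omega) (by omega) (by omega))
      (Pne a d ha (by omega) had)
      (hnex _) (hney _) (hnex _) (hney _) (hnex _) (hney _) (hnex _) (hney _)
  -- decision tree
  by_cases hZU : ((¬G.Adj x (P (d-1)) ∧ ¬G.Adj y (P (d-1))) ∧ 3 ≤ d) ∨
      ((¬G.Adj x (P (d+1)) ∧ ¬G.Adj y (P (d+1))) ∧ d ≤ n-3)
  · by_cases hZW : ((¬G.Adj x (P 1) ∧ ¬G.Adj y (P 1)) ∧ 3 ≤ d) ∨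
        ((¬G.Adj x (P (n-1)) ∧ ¬G.Adj y (P (n-1))) ∧ d ≤ n-3)
    · rcases hZU with ⟨hoa, hd3⟩ | ⟨hoa, hd3'⟩
      · rcases hZW with ⟨hob, _⟩ | ⟨hob, hdn3'⟩
        · by_cases hde3 : d = 3
          · rcases hBor with hoB | hoB
            · exact step5run (d+1) 1 (by omega) (by omega) hoB hob (by omega) (by omega)
                (by omega) (by omega) (by omega) (by omega) (by omega) (by omega)
                huz'1 hzw2
            · exact step5run (d-1) (n-1) (by omega) (by omega) hoa hoB (by omega) (by omega)
                (by omega) (by omega) (by omega) (by omega) (by omega) (by omega)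
                huz'n hzw1
          · exact step5run (d-1) 1 (by omega) (by omega) hoa hob (by omega) (by omega)
              (by omega) (by omega) (by omega) (by omega) (by omega) (by omega)
              huz'1 hzw1
        · exact step5run (d-1) (n-1) (by omega) (by omega) hoa hob (by omega) (by omega)
            (by omega) (by omega) (by omega) (by omega) (by omega) (by omega)
            huz'n hzw1
      · rcases hZW with ⟨hob, hd3⟩ | ⟨hob, hdn3'⟩
        · exact step5run (d+1) 1 (by omega) (by omega) hoa hob (by omega) (by omega)
            (by omega) (by omega) (by omega) (by omega) (by omega) (by omega)
            huz'1 hzw2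
        · by_cases hdn3 : d = n-3
          · rcases hFor with hoF | hoF
            · exact step5run (d+1) 1 (by omega) (by omega) hoa hoF (by omega) (by omega)
                (by omega) (by omega) (by omega) (by omega) (by omega) (by omega)
                huz'1 hzw2
            · exact step5run (d-1) (n-1) (by omega) (by omega) hoF hob (by omega) (by omega)
                (by omega) (by omega) (by omega) (by omega) (by omega) (by omega)
                huz'n hzw1
          · exact step5run (d+1) (n-1) (by omega) (by omega) hoa hob (by omega) (by omega)
              (by omega) (by omega) (by omega) (by omega) (by omega) (by omega)
              huz'n hzw2
    · rw [not_or] at hZW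
      -- case B (w side has no usable o-neighbour) : symmetric via swapping x and y
      have hoPd1 : ¬G.Adj x (P (d-1)) ∧ ¬G.Adj y (P (d-1)) := by
        rcases hFor with h | h
        · by_cases hd3 : 3 ≤ d
          · exact absurd ⟨h, hd3⟩ hZW.1
          · rwa [show d-1 = 1 by omega]
        · exact h
      have hoPd2 : ¬G.Adj x (P (d+1)) ∧ ¬G.Adj y (P (d+1)) := by
        rcases hBor with h | h
        · exact h
        · by_cases hd3 : d ≤ n-3
          · exact absurd ⟨h, hd3⟩ hZW.2
          · rwa [show n-1 = d+1 by omega] at h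
      have hsplit' : ∀ a b : ZMod n, a ≠ b → ¬(b = a+1 ∨ a = b+1) →
          G.Adj (v a) (v b) ∨ (G.Adj y (v a) ∧ G.Adj x (v b)) ∨
            (G.Adj y (v b) ∧ G.Adj x (v a)) := by
        intro a b hab hnc'
        rcases hsplit a b hab hnc' with h | h | h
        · exact Or.inl h
        · exact Or.inr (Or.inr ⟨h.2, h.1⟩)
        · exact Or.inr (Or.inl ⟨h.2, h.1⟩)
      have hcons' : ∀ a : ZMod n, ¬ G.Adj (v a) (v (a+1)) ∧
          ¬(G.Adj y (v a) ∧ G.Adj x (v (a+1))) ∧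
            ¬(G.Adj y (v (a+1)) ∧ G.Adj x (v a)) := by
        intro a
        obtain ⟨hc1, hc2, hc3⟩ := hcons a
        exact ⟨hc1, fun h => hc3 ⟨h.2, h.1⟩, fun h => hc2 ⟨h.2, h.1⟩⟩
      have hjnd : j + ((n-d:ℕ):ZMod n) = i := by
        rw [hjd, add_assoc, ← Nat.cast_add, show d + (n-d) = n by omega]
        simp
      have hj1 : j + ((1:ℕ):ZMod n) = i + ((d+1:ℕ):ZMod n) := by
        rw [hjd, add_assoc, ← Nat.cast_add]
      have hjn1 : j + ((n-1:ℕ):ZMod n) = i + ((d-1:ℕ):ZMod n) := by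
        rw [hjd, add_assoc, ← Nat.cast_add, show d + (n-1) = (d-1) + n by omega,
          Nat.cast_add]
        simp
      apply claim2caseA G y x hch hxy.symm n hn v hinj hney hnex hsplit' hcons' j (n-d)
        (by omega) (by omega) hyj (by rw [hjnd]; exact hxi)
        (by rw [hj1]; exact ⟨hoPd2.2, hoPd2.1⟩)
        (by rw [hjn1]; exact ⟨hoPd1.2, hoPd1.1⟩)
      intro k hky hkx
      rcases ho4 k hkx hky with (h | h) | (h | h) | h | h
      · -- k = i+1 : o at offset 1
        have hk : k = i + ((1:ℕ):ZMod n) := by rw [c1]; exact h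
        rw [hk] at hkx hky
        by_cases hd3 : 3 ≤ d
        · exact absurd ⟨⟨hkx, hky⟩, hd3⟩ hZW.1
        · right
          rw [hk, hjn1, show d-1 = 1 by omega]
      · -- i = k+1 : k = i + (n-1)
        have hk : k = i + ((n-1:ℕ):ZMod n) := (cm1 k i).2 h
        rw [hk] at hkx hky
        by_cases hd3 : d ≤ n-3
        · exact absurd ⟨⟨hkx, hky⟩, hd3⟩ hZW.2
        · left
          rw [hk, hj1, show d+1 = n-1 by omega]
      · -- j = k+1 : k = j + (n-1)
        right
        exact (cm1 k j).2 h
      · -- k = j+1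
        left
        rw [h, c1]
      · exact absurd (by rw [h]; exact hxi) hkx
      · exact absurd (by rw [h, hjd]; exact hyjP) hky
  · rw [not_or] at hZU
    -- case A : u side has no usable o-neighbour
    have hoP1 : ¬G.Adj x (P 1) ∧ ¬G.Adj y (P 1) := by
      rcases hFor with h | h
      · exact h
      · by_cases hd3 : 3 ≤ d
        · exact absurd ⟨h, hd3⟩ hZU.1
        · rwa [show d-1 = 1 by omega] at h
    have hoPn1 : ¬G.Adj x (P (n-1)) ∧ ¬G.Adj y (P (n-1)) := by
      rcases hBor with h | h
      · by_cases hd3 : d ≤ n-3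
        · exact absurd ⟨h, hd3⟩ hZU.2
        · rwa [show d+1 = n-1 by omega] at h
      · exact h
    apply claim2caseA G x y hch hxy n hn v hinj hnex hney hsplit hcons i d hd2 hdn
      hxi hyjP hoP1 hoPn1
    intro k hkx hky
    rcases ho4 k hkx hky with (h | h) | (h | h) | h | h
    · left; rw [h, c1]
    · right; exact (cm1 k i).2 h
    · -- j = k+1 : k = i + (d-1)
      have hk : k = i + ((d-1:ℕ):ZMod n) := by
        have e : (i + ((d-1:ℕ):ZMod n)) + 1 = i + ((d:ℕ):ZMod n) := by
          rw [shift_succ, show d-1+1 = d by omega]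
        have h2 : k + 1 = (i + ((d-1:ℕ):ZMod n)) + 1 := by
          rw [e, ← hjd]; exact h.symm
        exact add_right_cancel h2
      rw [hk] at hkx hky
      by_cases hd3 : 3 ≤ d
      · exact absurd ⟨⟨hkx, hky⟩, hd3⟩ hZU.1
      · left; rw [hk, show d-1 = 1 by omega]
    · -- k = j+1 : k = i + (d+1)
      have hk : k = i + ((d+1:ℕ):ZMod n) := by
        rw [h, hjd, shift_succ]
      rw [hk] at hkx hky
      by_cases hd3 : d ≤ n-3
      · exact absurd ⟨⟨hkx, hky⟩, hd3⟩ hZU.2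
      · right; rw [hk, show d+1 = n-1 by omega]
    · exact absurd (by rw [h]; exact hxi) hkx
    · exact absurd (by rw [h, hjd]; exact hyjP) hky



lemma claim2core (G : SimpleGraph V) (x y : V) (hch : Chordal G) (hxy : G.Adj x y)
    (n : ℕ) (hn : 6 ≤ n) (v : ZMod n → V)
    (hinj : Function.Injective v)
    (hnex : ∀ i, v i ≠ x) (hney : ∀ i, v i ≠ y)
    (hadj : ∀ i j, (tildeGraph G x y).Adj (v i) (v j) ↔
      (i ≠ j ∧ ¬(j = i+1 ∨ i = j+1))) : False := by
  haveI : NeZero n := ⟨by omega⟩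
  have hsplit : ∀ i j : ZMod n, i ≠ j → ¬(j = i+1 ∨ i = j+1) →
      G.Adj (v i) (v j) ∨ (G.Adj x (v i) ∧ G.Adj y (v j)) ∨
        (G.Adj x (v j) ∧ G.Adj y (v i)) := by
    intro i j hij hnc
    have hT := (hadj i j).2 ⟨hij, hnc⟩
    rw [tadj G x y (hnex i) (hney i) (hnex j) (hney j)] at hT
    exact hT.2
  have hone : (1 : ZMod n) ≠ 0 := by
    intro h
    have h' : ((1:ℕ) : ZMod n) = ((0:ℕ) : ZMod n) := by push_cast; exact h
    have := (natCast_inj (by omega) (by omega : (1:ℕ) < n) (by omega : (0:ℕ) < n)).1 h'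
    omega
  have hcons : ∀ i : ZMod n, ¬ G.Adj (v i) (v (i+1)) ∧
      ¬(G.Adj x (v i) ∧ G.Adj y (v (i+1))) ∧
        ¬(G.Adj x (v (i+1)) ∧ G.Adj y (v i)) := by
    intro i
    have hii : i ≠ i + 1 := by
      intro h
      exact hone (by linear_combination -h)
    have hT : ¬ (tildeGraph G x y).Adj (v i) (v (i+1)) := by
      rw [hadj]
      simp
    rw [tadj G x y (hnex i) (hney i) (hnex _) (hney _)] at hT
    push_neg at hT
    have h2 := hT (fun he => hii (hinj he))
    tauto
  by_cases hNS : ∃ i j : ZMod n, i ≠ j ∧ ¬(j = i+1 ∨ i = j+1) ∧ ¬ G.Adj (v i) (v j)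
  · obtain ⟨i, j, hij, hnc, hnG⟩ := hNS
    rcases hsplit i j hij hnc with h | h | h
    · exact hnG h
    · exact claim2A G x y hch hxy n hn v hinj hnex hney hsplit hcons i j hij hnc hnG h.1 h.2
    · exact claim2A G x y hch hxy n hn v hinj hnex hney hsplit hcons j i (Ne.symm hij)
        (by tauto) (fun hh => hnG hh.symm) h.1 h.2
  · push_neg at hNS
    have consec_cast : ∀ a b : ℕ, a < n → b < n →
        ((((b:ℕ):ZMod n) = ((a:ℕ):ZMod n) + 1 ∨ ((a:ℕ):ZMod n) = ((b:ℕ):ZMod n) + 1) ↔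
          (b = a+1 ∨ a = b+1 ∨ (a = n-1 ∧ b = 0) ∨ (b = n-1 ∧ a = 0))) := by
      intro a b ha hb
      rw [cast_succ_eq_iff (by omega) ha hb, cast_succ_eq_iff (by omega) hb ha]; omega
    have hG : ∀ a b : ℕ, a < n → b < n → a ≠ b →
        ¬(b = a+1 ∨ a = b+1 ∨ (a = n-1 ∧ b = 0) ∨ (b = n-1 ∧ a = 0)) →
        G.Adj (v ((a:ℕ):ZMod n)) (v ((b:ℕ):ZMod n)) := by
      intro a b ha hb hne hnc
      exact hNS _ _ (fun h => hne ((natCast_inj (by omega) ha hb).1 h))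
        ⟨fun h => hnc ((consec_cast a b ha hb).1 (Or.inl h)),
         fun h => hnc ((consec_cast a b ha hb).1 (Or.inr h))⟩
    have hnedge : ∀ a : ℕ, a + 1 < n →
        ¬ G.Adj (v ((a:ℕ):ZMod n)) (v ((a+1:ℕ):ZMod n)) := by
      intro a ha
      have := (hcons ((a:ℕ):ZMod n)).1
      rwa [cast_succ] at this
    have hvne : ∀ a b : ℕ, a < n → b < n → a ≠ b →
        v ((a:ℕ):ZMod n) ≠ v ((b:ℕ):ZMod n) := by
      intro a b ha hb hne h
      exact hne ((natCast_inj (by omega) ha hb).1 (hinj h))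
    -- C4 : v0 - v3 - v1 - v4 - v0
    exact chordal_no_C4 G hch (v ((0:ℕ):ZMod n)) (v ((3:ℕ):ZMod n)) (v ((1:ℕ):ZMod n))
      (v ((4:ℕ):ZMod n))
      (hG 0 3 (by omega) (by omega) (by omega) (by omega))
      (hG 3 1 (by omega) (by omega) (by omega) (by omega))
      (hG 1 4 (by omega) (by omega) (by omega) (by omega))
      (hG 4 0 (by omega) (by omega) (by omega) (by omega))
      (hnedge 0 (by omega))
      ((by intro h; exact hnedge 3 (by omega) h : ¬ G.Adj (v ((3:ℕ):ZMod n)) (v ((4:ℕ):ZMod n))))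
      (hvne 0 1 (by omega) (by omega) (by omega))
      (hvne 3 4 (by omega) (by omega) (by omega))


end TildeAux

open TildeAux in
/-- If `G` is chordal and `{x,y} ∈ E(G)`, then `G~` (restricted to `V(G) \ {x,y}`)
is weakly chordal: neither it nor its complement has an induced cycle of length `≥ 5`. -/
theorem tildeGraph_weaklyChordal (G : SimpleGraph V) (x y : V)
    (hchordal : Chordal G) (hxy : G.Adj x y) :
    (∀ n : ℕ, 5 ≤ n →
      ¬ HasInducedCycle
        (SimpleGraph.induce {v : V | v ≠ x ∧ v ≠ y} (tildeGraph G x y)) n) ∧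
    (∀ n : ℕ, 5 ≤ n →
      ¬ HasInducedCycle
        (SimpleGraph.induce {v : V | v ≠ x ∧ v ≠ y} (tildeGraph G x y))ᶜ n) := by
  constructor
  · intro n hn hic
    obtain ⟨v0, hinj0, hadj0⟩ := hic_to_zmod _ (by omega : 2 ≤ n) hic
    apply claim1core G x y hchordal hxy n hn (fun i => (v0 i : V))
    · intro a b h
      exact hinj0 (Subtype.ext h)
    · intro i; exact (v0 i).2.1
    · intro i; exact (v0 i).2.2
    · intro i j
      exact hadj0 i j
  · intro n hn hic
    obtain ⟨v0, hinj0, hadj0⟩ := hic_to_zmod _ (by omega : 2 ≤ n) hic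
    have hinj : Function.Injective (fun i : ZMod n => (v0 i : V)) :=
      fun a b h => hinj0 (Subtype.ext h)
    have hnex : ∀ i : ZMod n, (v0 i : V) ≠ x := fun i => (v0 i).2.1
    have hney : ∀ i : ZMod n, (v0 i : V) ≠ y := fun i => (v0 i).2.2
    have hadjC : ∀ i j : ZMod n, (tildeGraph G x y).Adj (v0 i : V) (v0 j : V) ↔
        (i ≠ j ∧ ¬(j = i+1 ∨ i = j+1)) := by
      intro i j
      have h := hadj0 i j
      rw [SimpleGraph.compl_adj] at h
      have hsub : (v0 i ≠ v0 j) ↔ i ≠ j :=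
        ⟨fun hne he => hne (congrArg v0 he), fun hne he => hne (hinj0 he)⟩
      constructor
      · intro hT
        have hij : i ≠ j := by
          rintro rfl
          exact (tildeGraph G x y).loopless.irrefl _ hT
        refine ⟨hij, fun hcons => ?_⟩
        have h2 := h.2 hcons
        exact h2.2 hT
      · rintro ⟨hij, hnc⟩
        by_contra hT
        exact hnc (h.1 ⟨hsub.2 hij, hT⟩)
    obtain rfl | hn6 : n = 5 ∨ 6 ≤ n := by omega
    · -- double the 5-cycle
      have hmulinj : Function.Injective (fun t : ZMod 5 => 2*t) := by decide
      apply claim1core G x y hchordal hxy 5 (by norm_num) (fun t => (v0 (2*t) : V))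
      · intro a b h
        exact hmulinj (hinj0 (Subtype.ext h))
      · intro i; exact hnex _
      · intro i; exact hney _
      · intro i j
        rw [hadjC (2*i) (2*j)]
        revert i j
        decide
    · exact claim2core G x y hchordal hxy n hn6 (fun i => (v0 i : V)) hinj hnex hney hadjC
end

section
/- Let G be a chordal graph with edge {x,y}, and let G~ be the graph on V(G)\{x,y} with edges E(G\{x,y}) ∪ {{u,v} : u ∈ N_G(x)\{y}, v ∈ N_G(y)\{x}, u ≠ v}. Suppose w_1,w_2,w_3,w_4 induce a 4-cycle in G~ with edges {w_1,w_2},{w_2,w_3},{w_3,w_4},{w_1,w_4}, where {x,w_1},{y,w_4} ∈ E(G) and {w_1,w_4} ∈ E(G~)\E(G). Then {x,w_3} ∈ E(G) and {y,w_2} ∈ E(G). -/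
open scoped Classical

variable {V : Type*} [DecidableEq V]

lemma inducedC4 {W : Type*} (G : SimpleGraph W) (a b c d : W)
    (hab : G.Adj a b) (hbc : G.Adj b c) (hcd : G.Adj c d) (hda : G.Adj d a)
    (hac : ¬ G.Adj a c) (hbd : ¬ G.Adj b d) (nac : a ≠ c) (nbd : b ≠ d) :
    HasInducedCycle G 4 := by
  have hca : ¬ G.Adj c a := fun h => hac h.symm
  have hdb : ¬ G.Adj d b := fun h => hbd h.symm
  refine ⟨![a,b,c,d], ?_, ?_⟩
  · have nab := hab.ne; have nbc := hbc.ne; have ncd := hcd.ne; have nda := hda.ne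
    intro i j h
    fin_cases i <;> fin_cases j <;> simp_all
  · intro i j
    fin_cases i <;> fin_cases j <;>
      simp [hab, hbc, hcd, hda, hab.symm, hbc.symm, hcd.symm, hda.symm, hac, hbd,
        hca, hdb, G.irrefl]

lemma inducedC5 {W : Type*} (G : SimpleGraph W) (a b c d e : W)
    (hab : G.Adj a b) (hbc : G.Adj b c) (hcd : G.Adj c d) (hde : G.Adj d e)
    (hea : G.Adj e a)
    (hac : ¬ G.Adj a c) (had : ¬ G.Adj a d) (hbd : ¬ G.Adj b d)
    (hbe : ¬ G.Adj b e) (hce : ¬ G.Adj c e)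
    (nac : a ≠ c) (nad : a ≠ d) (nbd : b ≠ d) (nbe : b ≠ e) (nce : c ≠ e) :
    HasInducedCycle G 5 := by
  have hca : ¬ G.Adj c a := fun h => hac h.symm
  have hda : ¬ G.Adj d a := fun h => had h.symm
  have hdb : ¬ G.Adj d b := fun h => hbd h.symm
  have heb : ¬ G.Adj e b := fun h => hbe h.symm
  have hec : ¬ G.Adj e c := fun h => hce h.symm
  refine ⟨![a,b,c,d,e], ?_, ?_⟩
  · have nab := hab.ne; have nbc := hbc.ne; have ncd := hcd.ne
    have nde := hde.ne; have nea := hea.ne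
    intro i j h
    fin_cases i <;> fin_cases j <;> simp_all
  · intro i j
    fin_cases i <;> fin_cases j <;>
      simp [hab, hbc, hcd, hde, hea, hab.symm, hbc.symm, hcd.symm, hde.symm, hea.symm,
        hac, had, hbd, hbe, hce, hca, hda, hdb, heb, hec, G.irrefl]

lemma inducedC6 {W : Type*} (G : SimpleGraph W) (a b c d e f : W)
    (hab : G.Adj a b) (hbc : G.Adj b c) (hcd : G.Adj c d) (hde : G.Adj d e)
    (hef : G.Adj e f) (hfa : G.Adj f a)
    (hac : ¬ G.Adj a c) (had : ¬ G.Adj a d) (hae : ¬ G.Adj a e)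
    (hbd : ¬ G.Adj b d) (hbe : ¬ G.Adj b e) (hbf : ¬ G.Adj b f)
    (hce : ¬ G.Adj c e) (hcf : ¬ G.Adj c f) (hdf : ¬ G.Adj d f)
    (nac : a ≠ c) (nad : a ≠ d) (nae : a ≠ e) (nbd : b ≠ d) (nbe : b ≠ e)
    (nbf : b ≠ f) (nce : c ≠ e) (ncf : c ≠ f) (ndf : d ≠ f) :
    HasInducedCycle G 6 := by
  have hca : ¬ G.Adj c a := fun h => hac h.symm
  have hda : ¬ G.Adj d a := fun h => had h.symm
  have hea : ¬ G.Adj e a := fun h => hae h.symm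
  have hdb : ¬ G.Adj d b := fun h => hbd h.symm
  have heb : ¬ G.Adj e b := fun h => hbe h.symm
  have hfb : ¬ G.Adj f b := fun h => hbf h.symm
  have hec : ¬ G.Adj e c := fun h => hce h.symm
  have hfc : ¬ G.Adj f c := fun h => hcf h.symm
  have hfd : ¬ G.Adj f d := fun h => hdf h.symm
  have hv5 : ![a,b,c,d,e,f] 5 = f := rfl
  refine ⟨![a,b,c,d,e,f], ?_, ?_⟩
  · have nab := hab.ne; have nbc := hbc.ne; have ncd := hcd.ne
    have nde := hde.ne; have nef := hef.ne; have nfa := hfa.ne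
    intro i j h
    fin_cases i <;> fin_cases j <;> simp_all [hv5]
  · intro i j
    fin_cases i <;> fin_cases j <;>
      simp [hab, hbc, hcd, hde, hef, hfa, hab.symm, hbc.symm, hcd.symm, hde.symm,
        hef.symm, hfa.symm, hac, had, hae, hbd, hbe, hbf, hce, hcf, hdf,
        hca, hda, hea, hdb, heb, hfb, hec, hfc, hfd, G.irrefl, hv5]

lemma tilde_adj_iff (G : SimpleGraph V) (x y u v : V) :
    (tildeGraph G x y).Adj u v ↔ u ≠ v ∧ u ≠ x ∧ u ≠ y ∧ v ≠ x ∧ v ≠ y ∧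
      (G.Adj u v ∨ (G.Adj x u ∧ G.Adj y v) ∨ (G.Adj x v ∧ G.Adj y u)) := by
  rw [tildeGraph, SimpleGraph.fromRel_adj]
  have hsym : G.Adj v u ↔ G.Adj u v := SimpleGraph.adj_comm G v u
  tauto

/-- If `w₁ w₂ w₃ w₄` induce a `4`-cycle in `G~`, with `{x,w₁}, {y,w₄} ∈ E(G)` and
`{w₁,w₄} ∈ E(G~) \ E(G)`, then `{x,w₃} ∈ E(G)` and `{y,w₂} ∈ E(G)`. -/
theorem tildeGraph_c4_edges (G : SimpleGraph V) (x y : V)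
    (hchordal : Chordal G) (hxy : G.Adj x y) (w₁ w₂ w₃ w₄ : V)
    (h12 : (tildeGraph G x y).Adj w₁ w₂) (h23 : (tildeGraph G x y).Adj w₂ w₃)
    (h34 : (tildeGraph G x y).Adj w₃ w₄) (h14 : (tildeGraph G x y).Adj w₁ w₄)
    (h13 : ¬ (tildeGraph G x y).Adj w₁ w₃) (h24 : ¬ (tildeGraph G x y).Adj w₂ w₄)
    (hne13 : w₁ ≠ w₃) (hne24 : w₂ ≠ w₄)
    (hxw1 : G.Adj x w₁) (hyw4 : G.Adj y w₄) (hw14 : ¬ G.Adj w₁ w₄) :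
    G.Adj x w₃ ∧ G.Adj y w₂ := by
  obtain ⟨ne12, n1x, n1y, n2x, n2y, e12o⟩ := (tilde_adj_iff G x y w₁ w₂).mp h12
  obtain ⟨ne23, -, -, n3x, n3y, e23o⟩ := (tilde_adj_iff G x y w₂ w₃).mp h23
  obtain ⟨ne34, -, -, n4x, n4y, e34o⟩ := (tilde_adj_iff G x y w₃ w₄).mp h34
  obtain ⟨ne14, -, -, -, -, -⟩ := (tilde_adj_iff G x y w₁ w₄).mp h14
  rw [tilde_adj_iff] at h13 h24
  have nG13 : ¬ G.Adj w₁ w₃ := fun h =>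
    h13 ⟨hne13, n1x, n1y, n3x, n3y, Or.inl h⟩
  have nyw3 : ¬ G.Adj y w₃ := fun h =>
    h13 ⟨hne13, n1x, n1y, n3x, n3y, Or.inr (Or.inl ⟨hxw1, h⟩)⟩
  have nG24 : ¬ G.Adj w₂ w₄ := fun h =>
    h24 ⟨hne24, n2x, n2y, n4x, n4y, Or.inl h⟩
  have nxw2 : ¬ G.Adj x w₂ := fun h =>
    h24 ⟨hne24, n2x, n2y, n4x, n4y, Or.inr (Or.inl ⟨h, hyw4⟩)⟩
  rcases e23o with e23 | ⟨h, _⟩ | ⟨hx3, hy2⟩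
  rotate_left
  · exact absurd h nxw2
  · exact ⟨hx3, hy2⟩
  by_cases hx3 : G.Adj x w₃ <;> by_cases hy2 : G.Adj y w₂
  · exact ⟨hx3, hy2⟩
  · -- x ~ w₃, ¬ y ~ w₂ : induced C4 on x w₁ w₂ w₃
    have e12 : G.Adj w₁ w₂ := by
      rcases e12o with h | ⟨_, h⟩ | ⟨h, _⟩
      · exact h
      · exact absurd h hy2
      · exact absurd h nxw2
    exact absurd (inducedC4 G x w₁ w₂ w₃ hxw1 e12 e23 hx3.symm nxw2 nG13
      (Ne.symm n2x) hne13) (hchordal 4 le_rfl)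
  · -- ¬ x ~ w₃, y ~ w₂ : induced C4 on y w₂ w₃ w₄
    have e34 : G.Adj w₃ w₄ := by
      rcases e34o with h | ⟨h, _⟩ | ⟨_, h⟩
      · exact h
      · exact absurd h hx3
      · exact absurd h nyw3
    exact absurd (inducedC4 G y w₂ w₃ w₄ hy2 e23 e34 hyw4.symm nyw3 nG24
      (Ne.symm n3y) hne24) (hchordal 4 le_rfl)
  · -- neither
    have e12 : G.Adj w₁ w₂ := by
      rcases e12o with h | ⟨_, h⟩ | ⟨h, _⟩
      · exact h
      · exact absurd h hy2
      · exact absurd h nxw2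
    have e34 : G.Adj w₃ w₄ := by
      rcases e34o with h | ⟨h, _⟩ | ⟨_, h⟩
      · exact h
      · exact absurd h hx3
      · exact absurd h nyw3
    by_cases hx4 : G.Adj x w₄
    · exact absurd (inducedC5 G x w₁ w₂ w₃ w₄ hxw1 e12 e23 e34 hx4.symm
        nxw2 hx3 nG13 hw14 nG24
        (Ne.symm n2x) (Ne.symm n3x) hne13 ne14 hne24) (hchordal 5 (by norm_num))
    · by_cases hy1 : G.Adj y w₁
      · exact absurd (inducedC5 G w₁ w₂ w₃ w₄ y e12 e23 e34 hyw4.symm hy1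
          nG13 hw14 nG24 (fun h => hy2 h.symm) (fun h => nyw3 h.symm)
          hne13 ne14 hne24 n2y n3y) (hchordal 5 (by norm_num))
      · exact absurd (inducedC6 G x w₁ w₂ w₃ w₄ y hxw1 e12 e23 e34 hyw4.symm hxy.symm
          nxw2 hx3 hx4 nG13 hw14 (fun h => hy1 h.symm) nG24 (fun h => hy2 h.symm)
          (fun h => nyw3 h.symm)
          (Ne.symm n2x) (Ne.symm n3x) (Ne.symm n4x) hne13 ne14 n1y hne24 n2y n3y)
          (hchordal 6 (by norm_num))
end
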